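/- arXiv:1403.6024 — 4 statements merged into one kernel-verified Lean document; each statement's English description precedes it below -/
import Mathlib

section
/- For all w, z ∈ (−1,1): if w + z > 0 then K₀(w,z) = (6/π²)·(1/(w−z))·log((1+w)/(1+z)), K₁(w,z) = (3/π²)·1/((1+w)(1+z)), and K₂(w,z) = (1/π²)·(2+w+z)/((1+w)²(1+z)²); and if w + z < 0 then K₀(w,z) = (6/π²)·(1/(z−w))·log((1−w)/(1−z)), K₁(w,z) = (3/π²)·1/((1−w)(1−z)), and K₂(w,z) = (1/π²)·(2−w−z)/((1−w)²(1−z)²). (For w = z the quotient (1/(w−z))·log((1+w)/(1+z)) is interpreted as its limit 1/(1+w) in the first case and 1/(1−w) in the second.) -/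
open MeasureTheory Real Filter Set

noncomputable section

/-- The transition kernel `Ψ₀(w,x,z)` of the Boltzmann–Grad limit of the two-dimensional
periodic Lorentz gas. -/
def psi0 (w x z : ℝ) : ℝ :=
  (6 / π ^ 2) *
  (if 0 < w ∧ -w < z ∧ z < w then
     (if 0 ≤ x ∧ x < 1 / (1 + w) then 1 else 0) +
     (if 1 / (1 + w) ≤ x ∧ x < 1 / (1 + z) then (x⁻¹ - 1 - z) / (w - z) else 0)
   else if 0 < z ∧ -z < w ∧ w < z then
     (if 0 ≤ x ∧ x < 1 / (1 + z) then 1 else 0) +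
     (if 1 / (1 + z) ≤ x ∧ x < 1 / (1 + w) then (x⁻¹ - 1 - w) / (z - w) else 0)
   else if w < 0 ∧ w < z ∧ z < -w then
     (if 0 ≤ x ∧ x < 1 / (1 - w) then 1 else 0) +
     (if 1 / (1 - w) ≤ x ∧ x < 1 / (1 - z) then (x⁻¹ - 1 + z) / (z - w) else 0)
   else if z < 0 ∧ z < w ∧ w < -z then
     (if 0 ≤ x ∧ x < 1 / (1 - z) then 1 else 0) +
     (if 1 / (1 - z) ≤ x ∧ x < 1 / (1 - w) then (x⁻¹ - 1 + w) / (w - z) else 0)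
   else
     (if 0 ≤ x ∧ x < 1 / (1 + |w|) then 1 else 0))

/-- The moments `K_p(w,z) = ∫₀^∞ x^p Ψ₀(w,x,z) dx`. -/
def K (p : ℕ) (w z : ℝ) : ℝ := ∫ x in Set.Ioi (0 : ℝ), x ^ p * psi0 w x z


lemma ite_eq_indicator (c d : ℝ) (f : ℝ → ℝ) :
    (fun x => if c ≤ x ∧ x < d then f x else 0) = (Ico c d).indicator f := by
  funext x
  simp [indicator_apply, mem_Ico]

lemma integrable_piece (c d : ℝ) (f : ℝ → ℝ) (hf : ContinuousOn f (Icc c d)) :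
    Integrable (fun x => if c ≤ x ∧ x < d then f x else 0) := by
  rw [ite_eq_indicator]
  exact (hf.integrableOn_Icc.mono_set Ico_subset_Icc_self).integrable_indicator
    measurableSet_Ico

lemma integral_piece (c d : ℝ) (hc : 0 ≤ c) (hcd : c ≤ d) (f : ℝ → ℝ) :
    ∫ x in Ioi (0:ℝ), (if c ≤ x ∧ x < d then f x else 0) = ∫ x in c..d, f x := by
  have : (fun x => if c ≤ x ∧ x < d then f x else 0) = (Ico c d).indicator f :=
    ite_eq_indicator c d f
  rw [this, setIntegral_indicator measurableSet_Ico,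
    intervalIntegral.integral_of_le hcd, integral_Ioc_eq_integral_Ioo]
  rcases hc.eq_or_lt with h | h
  · subst h
    have : Ioi (0:ℝ) ∩ Ico 0 d = Ioo 0 d := by
      ext x
      simp only [mem_inter_iff, mem_Ioi, mem_Ico, mem_Ioo]
      constructor
      · rintro ⟨h1, _, h3⟩; exact ⟨h1, h3⟩
      · rintro ⟨h1, h2⟩; exact ⟨h1, h1.le, h2⟩
    rw [this]
  · have h2 : Ioi (0:ℝ) ∩ Ico c d = Ico c d :=
      inter_eq_self_of_subset_right (fun x hx => lt_of_lt_of_le h hx.1)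
    rw [h2, integral_Ico_eq_integral_Ioo]

lemma branch_sum (p : ℕ) (s t : ℝ) (h1t : 0 < 1 + t) (hts : t < s) :
    ∫ x in Ioi (0:ℝ), x ^ p *
      ((if 0 ≤ x ∧ x < 1/(1+s) then 1 else 0) +
       (if 1/(1+s) ≤ x ∧ x < 1/(1+t) then (x⁻¹ - 1 - t)/(s - t) else 0)) =
    (∫ x in (0:ℝ)..(1/(1+s)), x ^ p) +
      ∫ x in (1/(1+s))..(1/(1+t)), x ^ p * ((x⁻¹ - 1 - t)/(s - t)) := by
  have h1s : 0 < 1 + s := by linarith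
  have ha : 0 < 1/(1+s) := by positivity
  have hab : 1/(1+s) ≤ 1/(1+t) := by
    apply one_div_le_one_div_of_le h1t
    linarith
  have hcont2 : ContinuousOn (fun x : ℝ => x ^ p * ((x⁻¹ - 1 - t)/(s - t)))
      (Icc (1/(1+s)) (1/(1+t))) := by
    apply (continuous_pow p).continuousOn.mul
    apply ContinuousOn.div_const
    apply ContinuousOn.sub _ continuousOn_const
    apply ContinuousOn.sub _ continuousOn_const
    apply ContinuousOn.inv₀ continuousOn_id
    intro x hx
    exact ne_of_gt (lt_of_lt_of_le ha hx.1)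
  have e1 : ∀ x : ℝ, x ^ p *
      ((if 0 ≤ x ∧ x < 1/(1+s) then 1 else 0) +
       (if 1/(1+s) ≤ x ∧ x < 1/(1+t) then (x⁻¹ - 1 - t)/(s - t) else 0)) =
      (if 0 ≤ x ∧ x < 1/(1+s) then x ^ p else 0) +
      (if 1/(1+s) ≤ x ∧ x < 1/(1+t) then x ^ p * ((x⁻¹ - 1 - t)/(s - t)) else 0) := by
    intro x
    rw [mul_add, mul_ite, mul_ite, mul_one, mul_zero]
  simp only [e1]
  rw [integral_add
    ((integrable_piece 0 (1/(1+s)) _ (continuous_pow p).continuousOn).restrict)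
    ((integrable_piece (1/(1+s)) (1/(1+t)) _ hcont2).restrict),
    integral_piece 0 (1/(1+s)) le_rfl ha.le,
    integral_piece (1/(1+s)) (1/(1+t)) ha.le hab]

lemma branch0 (s t : ℝ) (h1t : 0 < 1 + t) (hts : t < s) :
    ∫ x in Ioi (0:ℝ), x ^ 0 *
      ((if 0 ≤ x ∧ x < 1/(1+s) then 1 else 0) +
       (if 1/(1+s) ≤ x ∧ x < 1/(1+t) then (x⁻¹ - 1 - t)/(s - t) else 0)) =
    Real.log ((1+s)/(1+t)) / (s - t) := by
  have h1s : 0 < 1 + s := by linarith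
  have ha : 0 < 1/(1+s) := by positivity
  have hb : 0 < 1/(1+t) := by positivity
  have hab : 1/(1+s) ≤ 1/(1+t) := by
    apply one_div_le_one_div_of_le h1t; linarith
  rw [branch_sum 0 s t h1t hts]
  have hinv : IntervalIntegrable (fun x : ℝ => x⁻¹) volume (1/(1+s)) (1/(1+t)) := by
    apply intervalIntegral.intervalIntegrable_inv (f := fun x => x)
    · intro x hx
      rw [uIcc_of_le hab] at hx
      exact ne_of_gt (lt_of_lt_of_le ha hx.1)
    · exact continuousOn_id
  have e2 : ∫ x in (1/(1+s))..(1/(1+t)), x ^ 0 * ((x⁻¹ - 1 - t)/(s - t)) =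
      (Real.log ((1/(1+t))/(1/(1+s))) - ((1/(1+t)) - (1/(1+s))) * (1 + t)) / (s - t) := by
    simp only [pow_zero, one_mul, sub_sub]
    rw [intervalIntegral.integral_div,
      intervalIntegral.integral_sub hinv (intervalIntegrable_const),
      intervalIntegral.integral_const, integral_inv_of_pos ha hb, smul_eq_mul]
  rw [e2, integral_pow]
  have hba : (1/(1+t))/(1/(1+s)) = (1+s)/(1+t) := by
    field_simp
  rw [hba]
  have hst : s - t ≠ 0 := by intro h; linarith [sub_pos.mpr hts]
  norm_num only
  field_simp
  ring

lemma branch1 (s t : ℝ) (h1t : 0 < 1 + t) (hts : t < s) :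
    ∫ x in Ioi (0:ℝ), x ^ 1 *
      ((if 0 ≤ x ∧ x < 1/(1+s) then 1 else 0) +
       (if 1/(1+s) ≤ x ∧ x < 1/(1+t) then (x⁻¹ - 1 - t)/(s - t) else 0)) =
    1/(2*(1+s)*(1+t)) := by
  have h1s : 0 < 1 + s := by linarith
  have ha : 0 < 1/(1+s) := by positivity
  have hab : 1/(1+s) ≤ 1/(1+t) := by
    apply one_div_le_one_div_of_le h1t; linarith
  rw [branch_sum 1 s t h1t hts]
  have e2 : ∫ x in (1/(1+s))..(1/(1+t)), x ^ 1 * ((x⁻¹ - 1 - t)/(s - t)) =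
      (((1/(1+t)) - (1/(1+s))) - (1+t) * (((1/(1+t))^2 - (1/(1+s))^2)/2)) / (s - t) := by
    rw [intervalIntegral.integral_congr
      (g := fun x => (1 - (1+t)*x)/(s-t)) ?_]
    · rw [intervalIntegral.integral_div,
        intervalIntegral.integral_sub intervalIntegrable_const
          (intervalIntegral.intervalIntegrable_id.const_mul (1+t)),
        intervalIntegral.integral_const, intervalIntegral.integral_const_mul,
        integral_id, smul_eq_mul, mul_one]
    · intro x hx
      rw [uIcc_of_le hab] at hx
      have hx0 : x ≠ 0 := ne_of_gt (lt_of_lt_of_le ha hx.1)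
      have hnum : x ^ 1 * (x⁻¹ - 1 - t) = 1 - (1+t)*x := by
        field_simp [hx0]; ring
      simp only []
      rw [← mul_div_assoc, hnum]
  rw [e2, integral_pow]
  have hst : s - t ≠ 0 := by intro h; linarith [sub_pos.mpr hts]
  norm_num only
  field_simp
  ring

lemma branch2 (s t : ℝ) (h1t : 0 < 1 + t) (hts : t < s) :
    ∫ x in Ioi (0:ℝ), x ^ 2 *
      ((if 0 ≤ x ∧ x < 1/(1+s) then 1 else 0) +
       (if 1/(1+s) ≤ x ∧ x < 1/(1+t) then (x⁻¹ - 1 - t)/(s - t) else 0)) =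
    (2+s+t)/(6*(1+s)^2*(1+t)^2) := by
  have h1s : 0 < 1 + s := by linarith
  have ha : 0 < 1/(1+s) := by positivity
  have hab : 1/(1+s) ≤ 1/(1+t) := by
    apply one_div_le_one_div_of_le h1t; linarith
  rw [branch_sum 2 s t h1t hts]
  have e2 : ∫ x in (1/(1+s))..(1/(1+t)), x ^ 2 * ((x⁻¹ - 1 - t)/(s - t)) =
      ((((1/(1+t))^2 - (1/(1+s))^2)/2) - (1+t) * (((1/(1+t))^3 - (1/(1+s))^3)/3)) / (s - t) := by
    rw [intervalIntegral.integral_congr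
      (g := fun x => (x - (1+t)*x^2)/(s-t)) ?_]
    · rw [intervalIntegral.integral_div,
        intervalIntegral.integral_sub intervalIntegral.intervalIntegrable_id
          (((continuous_pow 2).intervalIntegrable _ _).const_mul (1+t)),
        intervalIntegral.integral_const_mul, integral_id, integral_pow]
      norm_num
    · intro x hx
      rw [uIcc_of_le hab] at hx
      have hx0 : x ≠ 0 := ne_of_gt (lt_of_lt_of_le ha hx.1)
      have hnum : x ^ 2 * (x⁻¹ - 1 - t) = x - (1+t)*x^2 := by
        field_simp [hx0]; ring
      simp only []
      rw [← mul_div_assoc, hnum]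
  rw [e2, integral_pow]
  have hst : s - t ≠ 0 := by intro h; linarith [sub_pos.mpr hts]
  norm_num only
  field_simp
  ring

lemma branch_diag (p : ℕ) (a : ℝ) (ha : 0 < a) :
    ∫ x in Ioi (0:ℝ), x ^ p * (if 0 ≤ x ∧ x < a then 1 else 0) = a^(p+1)/(p+1) := by
  have e1 : ∀ x : ℝ, x ^ p * (if 0 ≤ x ∧ x < a then 1 else 0) =
      (if 0 ≤ x ∧ x < a then x ^ p else 0) := by
    intro x; rw [mul_ite, mul_one, mul_zero]
  simp only [e1]
  rw [integral_piece 0 a le_rfl ha.le, integral_pow, zero_pow (Nat.succ_ne_zero p)]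
  ring

lemma K_eq_of (p : ℕ) (w z : ℝ) (g : ℝ → ℝ) (h : ∀ x, psi0 w x z = 6/π^2 * g x) :
    K p w z = 6/π^2 * ∫ x in Ioi (0:ℝ), x ^ p * g x := by
  unfold K
  rw [show (fun x => x ^ p * psi0 w x z) = (fun x => 6/π^2 * (x ^ p * g x)) from
    funext fun x => by rw [h x]; ring]
  exact MeasureTheory.integral_const_mul _ _

lemma psi0_eq1 (w z : ℝ) (h0 : 0 < w) (h1 : -w < z) (h2 : z < w) :
    ∀ x, psi0 w x z = 6/π^2 *
      ((if 0 ≤ x ∧ x < 1/(1+w) then 1 else 0) +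
       (if 1/(1+w) ≤ x ∧ x < 1/(1+z) then (x⁻¹ - 1 - z)/(w - z) else 0)) := by
  intro x; unfold psi0; rw [if_pos ⟨h0, h1, h2⟩]

lemma psi0_eq2 (w z : ℝ) (h0 : 0 < z) (h1 : -z < w) (h2 : w < z) :
    ∀ x, psi0 w x z = 6/π^2 *
      ((if 0 ≤ x ∧ x < 1/(1+z) then 1 else 0) +
       (if 1/(1+z) ≤ x ∧ x < 1/(1+w) then (x⁻¹ - 1 - w)/(z - w) else 0)) := by
  intro x; unfold psi0
  rw [if_neg (by rintro ⟨-, -, h⟩; linarith), if_pos ⟨h0, h1, h2⟩]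

lemma psi0_eq3 (w z : ℝ) (h0 : w < 0) (h1 : w < z) (h2 : z < -w) :
    ∀ x, psi0 w x z = 6/π^2 *
      ((if 0 ≤ x ∧ x < 1/(1 + -w) then 1 else 0) +
       (if 1/(1 + -w) ≤ x ∧ x < 1/(1 + -z) then (x⁻¹ - 1 - -z)/(-w - -z) else 0)) := by
  intro x; unfold psi0
  rw [if_neg (by rintro ⟨h, -, -⟩; linarith), if_neg (by rintro ⟨-, h, -⟩; linarith),
    if_pos ⟨h0, h1, h2⟩, show (1:ℝ) + -w = 1 - w from by ring,
    show (1:ℝ) + -z = 1 - z from by ring, show -w - -z = z - w from by ring,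
    show ∀ y : ℝ, y - 1 - -z = y - 1 + z from fun y => by ring]

lemma psi0_eq4 (w z : ℝ) (h0 : z < 0) (h1 : z < w) (h2 : w < -z) :
    ∀ x, psi0 w x z = 6/π^2 *
      ((if 0 ≤ x ∧ x < 1/(1 + -z) then 1 else 0) +
       (if 1/(1 + -z) ≤ x ∧ x < 1/(1 + -w) then (x⁻¹ - 1 - -w)/(-z - -w) else 0)) := by
  intro x; unfold psi0
  rw [if_neg (by rintro ⟨-, h, -⟩; linarith), if_neg (by rintro ⟨h, -, -⟩; linarith),
    if_neg (by rintro ⟨-, h, -⟩; linarith), if_pos ⟨h0, h1, h2⟩,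
    show (1:ℝ) + -w = 1 - w from by ring, show (1:ℝ) + -z = 1 - z from by ring,
    show -z - -w = w - z from by ring,
    show ∀ y : ℝ, y - 1 - -w = y - 1 + w from fun y => by ring]

lemma psi0_eq_diag_pos (w : ℝ) (h0 : 0 < w) :
    ∀ x, psi0 w x w = 6/π^2 * (if 0 ≤ x ∧ x < 1/(1 + w) then 1 else 0) := by
  intro x; unfold psi0
  rw [if_neg (by rintro ⟨-, -, h⟩; exact lt_irrefl w h),
    if_neg (by rintro ⟨-, -, h⟩; exact lt_irrefl w h),
    if_neg (by rintro ⟨-, h, -⟩; exact lt_irrefl w h),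
    if_neg (by rintro ⟨-, h, -⟩; exact lt_irrefl w h),
    abs_of_pos h0]

lemma psi0_eq_diag_neg (w : ℝ) (h0 : w < 0) :
    ∀ x, psi0 w x w = 6/π^2 * (if 0 ≤ x ∧ x < 1/(1 + -w) then 1 else 0) := by
  intro x; unfold psi0
  rw [if_neg (by rintro ⟨-, -, h⟩; exact lt_irrefl w h),
    if_neg (by rintro ⟨-, -, h⟩; exact lt_irrefl w h),
    if_neg (by rintro ⟨-, h, -⟩; exact lt_irrefl w h),
    if_neg (by rintro ⟨-, h, -⟩; exact lt_irrefl w h),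
    abs_of_neg h0]


/-- Explicit formulas for `K₀`, `K₁`, `K₂` in dimension `d = 2`. -/
theorem stmt0 (w z : ℝ) (hw : w ∈ Set.Ioo (-1 : ℝ) 1) (hz : z ∈ Set.Ioo (-1 : ℝ) 1) :
    (0 < w + z →
      ((w = z → K 0 w z = 6 / π ^ 2 * (1 / (1 + w))) ∧
       (w ≠ z → K 0 w z = 6 / π ^ 2 * (1 / (w - z)) * Real.log ((1 + w) / (1 + z))) ∧
       K 1 w z = 3 / π ^ 2 * (1 / ((1 + w) * (1 + z))) ∧
       K 2 w z = 1 / π ^ 2 * ((2 + w + z) / ((1 + w) ^ 2 * (1 + z) ^ 2)))) ∧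
    (w + z < 0 →
      ((w = z → K 0 w z = 6 / π ^ 2 * (1 / (1 - w))) ∧
       (w ≠ z → K 0 w z = 6 / π ^ 2 * (1 / (z - w)) * Real.log ((1 - w) / (1 - z))) ∧
       K 1 w z = 3 / π ^ 2 * (1 / ((1 - w) * (1 - z))) ∧
       K 2 w z = 1 / π ^ 2 * ((2 - w - z) / ((1 - w) ^ 2 * (1 - z) ^ 2)))) := by
  obtain ⟨hw1, hw2⟩ := hw
  obtain ⟨hz1, hz2⟩ := hz
  have hpi := Real.pi_ne_zero
  constructor
  · intro hsum
    rcases lt_trichotomy w z with hlt | heq | hgt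
    · -- w < z, branch 2, s = z, t = w
      have hpsi := psi0_eq2 w z (by linarith) (by linarith) hlt
      have h1w : (0:ℝ) < 1 + w := by linarith
      have h1z : (0:ℝ) < 1 + z := by linarith
      have hzw : z - w ≠ 0 := by intro h; linarith
      have hwz : w - z ≠ 0 := by intro h; linarith
      refine ⟨fun h => absurd h (ne_of_lt hlt), fun _ => ?_, ?_, ?_⟩
      · rw [K_eq_of 0 w z _ hpsi, branch0 z w h1w hlt]
        have hlog : Real.log ((1+z)/(1+w)) = - Real.log ((1+w)/(1+z)) := by
          rw [← Real.log_inv, inv_div]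
        rw [hlog]
        field_simp
        ring
      · rw [K_eq_of 1 w z _ hpsi, branch1 z w h1w hlt]
        field_simp
        ring
      · rw [K_eq_of 2 w z _ hpsi, branch2 z w h1w hlt]
        field_simp
        ring
    · -- w = z
      subst heq
      have hw0 : 0 < w := by linarith
      have h1w : (0:ℝ) < 1 + w := by linarith
      have hpsi := psi0_eq_diag_pos w hw0
      refine ⟨fun _ => ?_, fun h => absurd rfl h, ?_, ?_⟩
      · rw [K_eq_of 0 w w _ hpsi, branch_diag 0 _ (by positivity)]
        norm_num
      · rw [K_eq_of 1 w w _ hpsi, branch_diag 1 _ (by positivity)]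
        norm_num only
        field_simp
        ring
      · rw [K_eq_of 2 w w _ hpsi, branch_diag 2 _ (by positivity)]
        norm_num only
        field_simp
        ring
    · -- z < w, branch 1, s = w, t = z
      have hpsi := psi0_eq1 w z (by linarith) (by linarith) hgt
      have h1w : (0:ℝ) < 1 + w := by linarith
      have h1z : (0:ℝ) < 1 + z := by linarith
      have hwz : w - z ≠ 0 := by intro h; linarith
      refine ⟨fun h => absurd h (ne_of_gt hgt), fun _ => ?_, ?_, ?_⟩
      · rw [K_eq_of 0 w z _ hpsi, branch0 w z h1z hgt]
        ring
      · rw [K_eq_of 1 w z _ hpsi, branch1 w z h1z hgt]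
        field_simp
        ring
      · rw [K_eq_of 2 w z _ hpsi, branch2 w z h1z hgt]
        field_simp
  · intro hsum
    have e1 : (1:ℝ) + -w = 1 - w := by ring
    have e2 : (1:ℝ) + -z = 1 - z := by ring
    have h1w : (0:ℝ) < 1 - w := by linarith
    have h1z : (0:ℝ) < 1 - z := by linarith
    rcases lt_trichotomy w z with hlt | heq | hgt
    · -- w < z, branch 3, s = -w, t = -z
      have hpsi := psi0_eq3 w z (by linarith) hlt (by linarith)
      have hzw : z - w ≠ 0 := by intro h; linarith
      refine ⟨fun h => absurd h (ne_of_lt hlt), fun _ => ?_, ?_, ?_⟩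
      · rw [K_eq_of 0 w z _ hpsi, branch0 (-w) (-z) (by linarith) (by linarith),
          e1, e2, show -w - -z = z - w from by ring]
        ring
      · rw [K_eq_of 1 w z _ hpsi, branch1 (-w) (-z) (by linarith) (by linarith),
          e1, e2]
        field_simp
        ring
      · rw [K_eq_of 2 w z _ hpsi, branch2 (-w) (-z) (by linarith) (by linarith),
          e1, e2, show (2:ℝ) + -w + -z = 2 - w - z from by ring]
        field_simp
    · -- w = z < 0
      subst heq
      have hw0 : w < 0 := by linarith
      have hpsi := psi0_eq_diag_neg w hw0
      refine ⟨fun _ => ?_, fun h => absurd rfl h, ?_, ?_⟩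
      · rw [K_eq_of 0 w w _ hpsi, branch_diag 0 _ (by rw [e1]; positivity), e1]
        norm_num
      · rw [K_eq_of 1 w w _ hpsi, branch_diag 1 _ (by rw [e1]; positivity), e1]
        norm_num only
        field_simp
        ring
      · rw [K_eq_of 2 w w _ hpsi, branch_diag 2 _ (by rw [e1]; positivity), e1]
        norm_num only
        field_simp
        ring
    · -- z < w, branch 4, s = -z, t = -w
      have hpsi := psi0_eq4 w z (by linarith) hgt (by linarith)
      have hzw : z - w ≠ 0 := by intro h; linarith
      have hwz : w - z ≠ 0 := by intro h; linarith
      refine ⟨fun h => absurd h (ne_of_gt hgt), fun _ => ?_, ?_, ?_⟩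
      · rw [K_eq_of 0 w z _ hpsi, branch0 (-z) (-w) (by linarith) (by linarith),
          e1, e2, show -z - -w = w - z from by ring]
        have hlog : Real.log ((1-z)/(1-w)) = - Real.log ((1-w)/(1-z)) := by
          rw [← Real.log_inv, inv_div]
        rw [hlog]
        field_simp
        ring
      · rw [K_eq_of 1 w z _ hpsi, branch1 (-z) (-w) (by linarith) (by linarith),
          e1, e2]
        field_simp
        ring
      · rw [K_eq_of 2 w z _ hpsi, branch2 (-z) (-w) (by linarith) (by linarith),
          e1, e2, show (2:ℝ) + -z + -w = 2 - w - z from by ring]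
        field_simp
end
end

section
/- Define Ψ̄₀(x,z) := (1/2)·∫_{−1}^1 Ψ₀(w,x,z) dw, Ψ(x,z) := 2·∫_x^∞ Ψ̄₀(x',z) dx', and Ψ̄(z) := ∫₀^∞ Ψ(x,z) dx. Then there is a constant C such that Ψ̄(z) ≤ C·(1 + log(1/(1−|z|))) for all z ∈ (−1,1); in particular Ψ̄ is integrable on (−1,1), i.e. Ψ̄ ∈ L¹((−1,1), dz). -/
open MeasureTheory Real Filter Set

noncomputable section

lemma six_pi_pos : (0:ℝ) < 6 / π ^ 2 := by positivity

/-- generic ratio bound -/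
lemma ratio01 {s t x : ℝ} (hst : s < t) (hs : -1 < s)
    (h1 : 1/(1+t) ≤ x) (h2 : x < 1/(1+s)) :
    0 ≤ (x⁻¹ - 1 - s)/(t - s) ∧ (x⁻¹ - 1 - s)/(t - s) ≤ 1 := by
  have hs0 : (0:ℝ) < 1 + s := by linarith
  have ht0 : (0:ℝ) < 1 + t := by linarith
  have hx : 0 < x := lt_of_lt_of_le (by positivity) h1
  have hxi1 : x⁻¹ ≤ 1 + t := by
    rw [inv_eq_one_div]
    calc 1/x ≤ 1/(1/(1+t)) := one_div_le_one_div_of_le (by positivity) h1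
    _ = 1 + t := by field_simp
  have hxi2 : 1 + s < x⁻¹ := by
    rw [inv_eq_one_div]
    calc 1 + s = 1/(1/(1+s)) := by field_simp
    _ < 1/x := one_div_lt_one_div_of_lt hx h2
  constructor
  · apply div_nonneg <;> linarith
  · rw [div_le_one (by linarith)]; linarith

lemma iteAddNonneg {c1 c2 : Prop} [Decidable c1] [Decidable c2] {r : ℝ}
    (hr : c2 → 0 ≤ r) : 0 ≤ (if c1 then (1:ℝ) else 0) + (if c2 then r else 0) := by
  apply add_nonneg
  · split_ifs <;> norm_num
  · split_ifs with h
    exacts [hr h, le_refl 0]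

lemma iteSumLeOne {c1 c2 : Prop} [Decidable c1] [Decidable c2] {r : ℝ}
    (h12 : ¬(c1 ∧ c2)) (hr0 : c2 → 0 ≤ r) (hr : c2 → r ≤ 1) :
    (if c1 then (1:ℝ) else 0) + (if c2 then r else 0) ≤ 1 := by
  by_cases h1 : c1
  · rw [if_pos h1, if_neg (fun h2 => h12 ⟨h1, h2⟩)]; norm_num
  · rw [if_neg h1]
    by_cases h2 : c2
    · rw [if_pos h2]; linarith [hr h2]
    · rw [if_neg h2]; norm_num

lemma psi0_nonneg {w z : ℝ} (x : ℝ) (hw : -1 < w) (hw1 : w < 1) (hz : -1 < z) (hz1 : z < 1) :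
    0 ≤ psi0 w x z := by
  unfold psi0
  apply mul_nonneg six_pi_pos.le
  by_cases h1 : 0 < w ∧ -w < z ∧ z < w
  · rw [if_pos h1]
    exact iteAddNonneg (fun hc => (ratio01 h1.2.2 hz hc.1 hc.2).1)
  rw [if_neg h1]
  by_cases h2 : 0 < z ∧ -z < w ∧ w < z
  · rw [if_pos h2]
    exact iteAddNonneg (fun hc => (ratio01 h2.2.2 hw hc.1 hc.2).1)
  rw [if_neg h2]
  by_cases h3 : w < 0 ∧ w < z ∧ z < -w
  · rw [if_pos h3]
    refine iteAddNonneg (fun hc => ?_)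
    have e : (x⁻¹ - 1 + z)/(z - w) = (x⁻¹ - 1 - (-z))/((-w) - (-z)) := by ring
    rw [e]
    refine (ratio01 (by linarith [h3.2.1] : -z < -w) (by linarith) ?_ ?_).1
    · rw [show (1:ℝ) + -w = 1 - w by ring]; exact hc.1
    · rw [show (1:ℝ) + -z = 1 - z by ring]; exact hc.2
  rw [if_neg h3]
  by_cases h4 : z < 0 ∧ z < w ∧ w < -z
  · rw [if_pos h4]
    refine iteAddNonneg (fun hc => ?_)
    have e : (x⁻¹ - 1 + w)/(w - z) = (x⁻¹ - 1 - (-w))/((-z) - (-w)) := by ring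
    rw [e]
    refine (ratio01 (by linarith [h4.2.1] : -w < -z) (by linarith) ?_ ?_).1
    · rw [show (1:ℝ) + -z = 1 - z by ring]; exact hc.1
    · rw [show (1:ℝ) + -w = 1 - w by ring]; exact hc.2
  rw [if_neg h4]
  split_ifs <;> norm_num

lemma psi0_le {w z : ℝ} (x : ℝ) (hw : -1 < w) (hw1 : w < 1) (hz : -1 < z) (hz1 : z < 1) :
    psi0 w x z ≤ 6 / π ^ 2 := by
  unfold psi0
  nth_rewrite 2 [← mul_one (6 / π ^ 2)]
  apply mul_le_mul_of_nonneg_left _ six_pi_pos.le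
  by_cases h1 : 0 < w ∧ -w < z ∧ z < w
  · rw [if_pos h1]
    exact iteSumLeOne (fun h => absurd (lt_of_lt_of_le h.1.2 h.2.1) (lt_irrefl x))
      (fun hc => (ratio01 h1.2.2 hz hc.1 hc.2).1) (fun hc => (ratio01 h1.2.2 hz hc.1 hc.2).2)
  rw [if_neg h1]
  by_cases h2 : 0 < z ∧ -z < w ∧ w < z
  · rw [if_pos h2]
    exact iteSumLeOne (fun h => absurd (lt_of_lt_of_le h.1.2 h.2.1) (lt_irrefl x))
      (fun hc => (ratio01 h2.2.2 hw hc.1 hc.2).1) (fun hc => (ratio01 h2.2.2 hw hc.1 hc.2).2)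
  rw [if_neg h2]
  by_cases h3 : w < 0 ∧ w < z ∧ z < -w
  · rw [if_pos h3]
    have e : (x⁻¹ - 1 + z)/(z - w) = (x⁻¹ - 1 - (-z))/((-w) - (-z)) := by ring
    rw [e]
    have harg : (1 / (1 - w) ≤ x ∧ x < 1 / (1 - z)) → (1/(1+(-w)) ≤ x ∧ x < 1/(1+(-z))) := by
      intro hc
      refine ⟨?_, ?_⟩
      · rw [show (1:ℝ) + -w = 1 - w by ring]; exact hc.1
      · rw [show (1:ℝ) + -z = 1 - z by ring]; exact hc.2
    exact iteSumLeOne (fun h => absurd (lt_of_lt_of_le h.1.2 h.2.1) (lt_irrefl x))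
      (fun hc => (ratio01 (by linarith [h3.2.1] : -z < -w) (by linarith) (harg hc).1 (harg hc).2).1)
      (fun hc => (ratio01 (by linarith [h3.2.1] : -z < -w) (by linarith) (harg hc).1 (harg hc).2).2)
  rw [if_neg h3]
  by_cases h4 : z < 0 ∧ z < w ∧ w < -z
  · rw [if_pos h4]
    have e : (x⁻¹ - 1 + w)/(w - z) = (x⁻¹ - 1 - (-w))/((-z) - (-w)) := by ring
    rw [e]
    have harg : (1 / (1 - z) ≤ x ∧ x < 1 / (1 - w)) → (1/(1+(-z)) ≤ x ∧ x < 1/(1+(-w))) := by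
      intro hc
      refine ⟨?_, ?_⟩
      · rw [show (1:ℝ) + -z = 1 - z by ring]; exact hc.1
      · rw [show (1:ℝ) + -w = 1 - w by ring]; exact hc.2
    exact iteSumLeOne (fun h => absurd (lt_of_lt_of_le h.1.2 h.2.1) (lt_irrefl x))
      (fun hc => (ratio01 (by linarith [h4.2.1] : -w < -z) (by linarith) (harg hc).1 (harg hc).2).1)
      (fun hc => (ratio01 (by linarith [h4.2.1] : -w < -z) (by linarith) (harg hc).1 (harg hc).2).2)
  rw [if_neg h4]
  split_ifs <;> norm_num

lemma notlt1 {x a : ℝ} (hx : 1 ≤ x) (ha : 1 ≤ a) : ¬(0 ≤ x ∧ x < 1/a) := by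
  intro h
  have : 1/a ≤ 1 := (div_le_one (by linarith)).mpr ha
  linarith [h.2]

lemma notlt2 {x a c : ℝ} (hc : 0 < c) (hcx : 1/c ≤ x) (hca : c ≤ a) : ¬(x < 1/a) := by
  intro h
  have : 1/a ≤ 1/c := one_div_le_one_div_of_le hc hca
  linarith

lemma auxinv1 {a x : ℝ} (ha : 0 < a) (h : 1/a ≤ x) : x⁻¹ ≤ a := by
  have hx : 0 < x := lt_of_lt_of_le (by positivity) h
  have := one_div_le_one_div_of_le (by positivity) h
  rwa [one_div_one_div, ← inv_eq_one_div] at this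

lemma auxinv2 {a x : ℝ} (hx : 0 < x) (h : x < 1/a) : a < x⁻¹ := by
  rcases le_or_gt a 0 with ha | ha
  · exact lt_of_le_of_lt ha (by positivity)
  · have := one_div_lt_one_div_of_lt hx h
    rwa [one_div_one_div, ← inv_eq_one_div] at this

lemma psi0_eq_zero {w z : ℝ} (x : ℝ) (hz : -1 < z) (hz1 : z < 1)
    (hx1 : 1 ≤ x) (hxX : 1/(1-|z|) ≤ x) : psi0 w x z = 0 := by
  have hza : |z| < 1 := abs_lt.mpr ⟨hz, hz1⟩
  have hzpos : 0 < 1 - |z| := by linarith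
  unfold psi0
  by_cases h1 : 0 < w ∧ -w < z ∧ z < w
  · rw [if_pos h1, if_neg (notlt1 hx1 (by linarith [h1.1])),
      if_neg (fun h => notlt2 hzpos hxX (by linarith [neg_abs_le z]) h.2)]
    ring
  rw [if_neg h1]
  by_cases h2 : 0 < z ∧ -z < w ∧ w < z
  · rw [if_pos h2, if_neg (notlt1 hx1 (by linarith [h2.1])),
      if_neg (fun h => notlt2 hzpos hxX (by
        have : |z| = z := abs_of_pos h2.1
        linarith [h2.2.1]) h.2)]
    ring
  rw [if_neg h2]
  by_cases h3 : w < 0 ∧ w < z ∧ z < -w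
  · rw [if_pos h3, if_neg (notlt1 hx1 (by linarith [h3.1])),
      if_neg (fun h => notlt2 hzpos hxX (by linarith [le_abs_self z]) h.2)]
    ring
  rw [if_neg h3]
  by_cases h4 : z < 0 ∧ z < w ∧ w < -z
  · rw [if_pos h4, if_neg (notlt1 hx1 (by linarith [h4.1])),
      if_neg (fun h => notlt2 hzpos hxX (by
        have : |z| = -z := abs_of_neg h4.1
        linarith [h4.2.2]) h.2)]
    ring
  rw [if_neg h4, if_neg (notlt1 hx1 (by linarith [abs_nonneg w]))]
  ring

lemma psi0_le_refined {w z : ℝ} (x : ℝ) (hw : -1 < w) (hw1 : w < 1) (hz : -1 < z) (hz1 : z < 1)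
    (hz2 : 1/2 ≤ |z|) (hx1 : 1 ≤ x) :
    psi0 w x z ≤ (if 1 - x⁻¹ < |w| then 12/π^2 * x⁻¹ else 0) := by
  have hx0 : 0 < x := by linarith
  have hxi0 : 0 < x⁻¹ := by positivity
  have hxi1 : x⁻¹ ≤ 1 := by
    rw [inv_eq_one_div]; exact (div_le_one hx0).mpr hx1
  have hxx : 1/x⁻¹ = x := by rw [one_div, inv_inv]
  by_cases hwbig : 1 - x⁻¹ < |w|
  swap
  · -- |w| ≤ 1 - x⁻¹ : psi0 = 0
    push_neg at hwbig
    rw [if_neg (by push_neg; exact hwbig)]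
    have habs : -(1-x⁻¹) ≤ w ∧ w ≤ 1-x⁻¹ := abs_le.mp hwbig
    have key : psi0 w x z = 0 := by
      unfold psi0
      by_cases h1 : 0 < w ∧ -w < z ∧ z < w
      · rw [if_pos h1, if_neg (notlt1 hx1 (by linarith [h1.1])),
          if_neg (fun h => notlt2 hxi0 hxx.le (by linarith [h1.2.1, habs.1]) h.2)]
        ring
      rw [if_neg h1]
      by_cases h2 : 0 < z ∧ -z < w ∧ w < z
      · rw [if_pos h2, if_neg (notlt1 hx1 (by linarith [h2.1])),
          if_neg (fun h => notlt2 hxi0 hxx.le (by linarith [habs.1]) h.2)]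
        ring
      rw [if_neg h2]
      by_cases h3 : w < 0 ∧ w < z ∧ z < -w
      · rw [if_pos h3, if_neg (notlt1 hx1 (by linarith [h3.1])),
          if_neg (fun h => notlt2 hxi0 hxx.le (by linarith [h3.2.2, habs.1]) h.2)]
        ring
      rw [if_neg h3]
      by_cases h4 : z < 0 ∧ z < w ∧ w < -z
      · rw [if_pos h4, if_neg (notlt1 hx1 (by linarith [h4.1])),
          if_neg (fun h => notlt2 hxi0 hxx.le (by linarith [habs.2]) h.2)]
        ring
      rw [if_neg h4, if_neg (notlt1 hx1 (by linarith [abs_nonneg w]))]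
      ring
    rw [key]
  · rw [if_pos hwbig]
    have rle : ∀ num den : ℝ, num ≤ x⁻¹ → 0 ≤ num → 1/2 ≤ den → num/den ≤ 2*x⁻¹ := by
      intro num den h1 h2 h3
      calc num/den ≤ num/(1/2) := by
            apply div_le_div_of_nonneg_left h2 (by norm_num) h3
        _ = 2*num := by ring
        _ ≤ 2*x⁻¹ := by linarith
    have target : (12:ℝ)/π^2 * x⁻¹ = 6/π^2 * (2*x⁻¹) := by ring
    rw [target]
    unfold psi0
    apply mul_le_mul_of_nonneg_left _ six_pi_pos.le
    by_cases h1 : 0 < w ∧ -w < z ∧ z < w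
    · rw [if_pos h1, if_neg (notlt1 hx1 (by linarith [h1.1])), zero_add]
      split_ifs with hc
      · have hz0 : 1 + z < 1 := by
          have h0 : 0 < 1 + z := by linarith
          have h' : (1:ℝ) < 1/(1+z) := lt_of_le_of_lt hx1 hc.2
          linarith [(one_lt_div h0).mp h']
        have hzneg : z ≤ -(1/2) := by
          rcases abs_cases z with ⟨e, _⟩ | ⟨e, _⟩ <;> linarith
        exact rle _ _ (by linarith [auxinv1 (show (0:ℝ) < 1+w by linarith [h1.1]) hc.1])
          (by linarith [auxinv2 hx0 hc.2]) (by linarith [h1.1])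
      · positivity
    rw [if_neg h1]
    by_cases h2 : 0 < z ∧ -z < w ∧ w < z
    · rw [if_pos h2, if_neg (notlt1 hx1 (by linarith [h2.1])), zero_add]
      split_ifs with hc
      · have hw0 : 1 + w < 1 := by
          have h0 : 0 < 1 + w := by linarith
          have h' : (1:ℝ) < 1/(1+w) := lt_of_le_of_lt hx1 hc.2
          linarith [(one_lt_div h0).mp h']
        have hzpos : 1/2 ≤ z := by
          rcases abs_cases z with ⟨e, _⟩ | ⟨e, _⟩ <;> linarith
        exact rle _ _ (by linarith [auxinv1 (show (0:ℝ) < 1+z by linarith [h2.1]) hc.1])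
          (by linarith [auxinv2 hx0 hc.2]) (by linarith)
      · positivity
    rw [if_neg h2]
    by_cases h3 : w < 0 ∧ w < z ∧ z < -w
    · rw [if_pos h3, if_neg (notlt1 hx1 (by linarith [h3.1])), zero_add]
      split_ifs with hc
      · have hz0 : 1 - z < 1 := by
          have h0 : 0 < 1 - z := by linarith
          have h' : (1:ℝ) < 1/(1-z) := lt_of_le_of_lt hx1 hc.2
          linarith [(one_lt_div h0).mp h']
        have hzpos' : 1/2 ≤ z := by
          rcases abs_cases z with ⟨e, _⟩ | ⟨e, _⟩ <;> linarith
        have e : (x⁻¹ - 1 + z)/(z - w) = (x⁻¹ - (1 - z))/(z - w) := by ring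
        rw [e]
        refine rle _ _ (by linarith) ?_ (by linarith [h3.1])
        have := auxinv2 hx0 hc.2
        linarith
      · positivity
    rw [if_neg h3]
    by_cases h4 : z < 0 ∧ z < w ∧ w < -z
    · rw [if_pos h4, if_neg (notlt1 hx1 (by linarith [h4.1])), zero_add]
      split_ifs with hc
      · have hw0 : 1 - w < 1 := by
          have h0 : 0 < 1 - w := by linarith
          have h' : (1:ℝ) < 1/(1-w) := lt_of_le_of_lt hx1 hc.2
          linarith [(one_lt_div h0).mp h']
        have hzneg : z ≤ -(1/2) := by
          rcases abs_cases z with ⟨e, _⟩ | ⟨e, _⟩ <;> linarith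
        have e : (x⁻¹ - 1 + w)/(w - z) = (x⁻¹ - (1 - w))/(w - z) := by ring
        rw [e]
        refine rle _ _ (by linarith) ?_ (by linarith)
        have := auxinv2 hx0 hc.2
        linarith
      · positivity
    rw [if_neg h4, if_neg (notlt1 hx1 (by linarith [abs_nonneg w]))]
    positivity

lemma psi0_measurable : Measurable (fun p : ℝ × ℝ × ℝ => psi0 p.1 p.2.1 p.2.2) := by
  have mw : Measurable fun p : ℝ × ℝ × ℝ => p.1 := measurable_fst
  have mx : Measurable fun p : ℝ × ℝ × ℝ => p.2.1 := measurable_fst.comp measurable_snd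
  have mz : Measurable fun p : ℝ × ℝ × ℝ => p.2.2 := measurable_snd.comp measurable_snd
  have f1 : Measurable fun p : ℝ × ℝ × ℝ => 1/(1+p.1) :=
    measurable_const.div (measurable_const.add mw)
  have f2 : Measurable fun p : ℝ × ℝ × ℝ => 1/(1+p.2.2) :=
    measurable_const.div (measurable_const.add mz)
  have f3 : Measurable fun p : ℝ × ℝ × ℝ => 1/(1-p.1) :=
    measurable_const.div (measurable_const.sub mw)
  have f4 : Measurable fun p : ℝ × ℝ × ℝ => 1/(1-p.2.2) :=
    measurable_const.div (measurable_const.sub mz)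
  have f5 : Measurable fun p : ℝ × ℝ × ℝ => 1/(1+|p.1|) :=
    measurable_const.div (measurable_const.add mw.abs)
  have r1 : Measurable fun p : ℝ × ℝ × ℝ => (p.2.1⁻¹ - 1 - p.2.2)/(p.1 - p.2.2) :=
    ((mx.inv.sub measurable_const).sub mz).div (mw.sub mz)
  have r2 : Measurable fun p : ℝ × ℝ × ℝ => (p.2.1⁻¹ - 1 - p.1)/(p.2.2 - p.1) :=
    ((mx.inv.sub measurable_const).sub mw).div (mz.sub mw)
  have r3 : Measurable fun p : ℝ × ℝ × ℝ => (p.2.1⁻¹ - 1 + p.2.2)/(p.2.2 - p.1) :=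
    ((mx.inv.sub measurable_const).add mz).div (mz.sub mw)
  have r4 : Measurable fun p : ℝ × ℝ × ℝ => (p.2.1⁻¹ - 1 + p.1)/(p.1 - p.2.2) :=
    ((mx.inv.sub measurable_const).add mw).div (mw.sub mz)
  unfold psi0
  refine Measurable.const_mul ?_ _
  refine Measurable.ite ?_ (Measurable.add ?_ ?_) ?_
  · exact (measurableSet_lt measurable_const mw).inter
      ((measurableSet_lt mw.neg mz).inter (measurableSet_lt mz mw))
  · exact Measurable.ite ((measurableSet_le measurable_const mx).inter
      (measurableSet_lt mx f1)) measurable_const measurable_const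
  · exact Measurable.ite ((measurableSet_le f1 mx).inter
      (measurableSet_lt mx f2)) r1 measurable_const
  refine Measurable.ite ?_ (Measurable.add ?_ ?_) ?_
  · exact (measurableSet_lt measurable_const mz).inter
      ((measurableSet_lt mz.neg mw).inter (measurableSet_lt mw mz))
  · exact Measurable.ite ((measurableSet_le measurable_const mx).inter
      (measurableSet_lt mx f2)) measurable_const measurable_const
  · exact Measurable.ite ((measurableSet_le f2 mx).inter
      (measurableSet_lt mx f1)) r2 measurable_const
  refine Measurable.ite ?_ (Measurable.add ?_ ?_) ?_
  · exact (measurableSet_lt mw measurable_const).inter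
      ((measurableSet_lt mw mz).inter (measurableSet_lt mz mw.neg))
  · exact Measurable.ite ((measurableSet_le measurable_const mx).inter
      (measurableSet_lt mx f3)) measurable_const measurable_const
  · exact Measurable.ite ((measurableSet_le f3 mx).inter
      (measurableSet_lt mx f4)) r3 measurable_const
  refine Measurable.ite ?_ (Measurable.add ?_ ?_) ?_
  · exact (measurableSet_lt mz measurable_const).inter
      ((measurableSet_lt mz mw).inter (measurableSet_lt mw mz.neg))
  · exact Measurable.ite ((measurableSet_le measurable_const mx).inter
      (measurableSet_lt mx f4)) measurable_const measurable_const
  · exact Measurable.ite ((measurableSet_le f4 mx).inter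
      (measurableSet_lt mx f3)) r4 measurable_const
  exact Measurable.ite ((measurableSet_le measurable_const mx).inter
    (measurableSet_lt mx f5)) measurable_const measurable_const

/-- `Ψ̄₀(x,z) := (1/2)·∫_{−1}^1 Ψ₀(w,x,z) dw`. -/
def psi0bar (x z : ℝ) : ℝ := (1 / 2) * ∫ w in Set.Ioo (-1 : ℝ) 1, psi0 w x z

/-- `Ψ(x,z) := 2·∫_x^∞ Ψ̄₀(x',z) dx'`. -/
def PsiCT (x z : ℝ) : ℝ := 2 * ∫ x' in Set.Ioi x, psi0bar x' z

/-- `Ψ̄(z) := ∫₀^∞ Ψ(x,z) dx`. -/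
def PsiBarMarg (z : ℝ) : ℝ := ∫ x in Set.Ioi (0 : ℝ), PsiCT x z


section psi0barLemmas


lemma psi0bar_nonneg {z : ℝ} (hz : -1 < z) (hz1 : z < 1) (x : ℝ) : 0 ≤ psi0bar x z := by
  unfold psi0bar
  apply mul_nonneg (by norm_num)
  exact setIntegral_nonneg measurableSet_Ioo fun w hw => psi0_nonneg x hw.1 hw.2 hz hz1

lemma psi0bar_le {z : ℝ} (hz : -1 < z) (hz1 : z < 1) (x : ℝ) : psi0bar x z ≤ 6 / π ^ 2 := by
  unfold psi0bar
  have h1 : ∫ w in Set.Ioo (-1:ℝ) 1, psi0 w x z ≤ ∫ _ in Set.Ioo (-1:ℝ) 1, (6/π^2 : ℝ) := by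
    apply integral_mono_of_nonneg
    · exact (ae_restrict_iff' measurableSet_Ioo).mpr (.of_forall fun w hw =>
        psi0_nonneg x hw.1 hw.2 hz hz1)
    · exact (integrableOn_const_iff).mpr (Or.inr measure_Ioo_lt_top)
    · exact (ae_restrict_iff' measurableSet_Ioo).mpr (.of_forall fun w hw =>
        psi0_le x hw.1 hw.2 hz hz1)
  have h2 : ∫ _ in Set.Ioo (-1:ℝ) 1, (6/π^2 : ℝ) = 2 * (6/π^2) := by
    rw [setIntegral_const, measureReal_def, Real.volume_Ioo, smul_eq_mul,
      show (1:ℝ) - -1 = 2 by norm_num, ENNReal.toReal_ofReal (by norm_num)]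
  rw [h2] at h1
  linarith

lemma psi0bar_eq_zero {z x : ℝ} (hz : -1 < z) (hz1 : z < 1) (hx1 : 1 ≤ x) (hxX : 1/(1-|z|) ≤ x) : psi0bar x z = 0 := by
  unfold psi0bar
  have : ∀ w : ℝ, psi0 w x z = 0 := fun w => psi0_eq_zero x hz hz1 hx1 hxX
  simp [this]

lemma psi0bar_le_refined {z x : ℝ} (hz : -1 < z) (hz1 : z < 1) (hz2 : 1/2 ≤ |z|) (hx1 : 1 ≤ x) :
    psi0bar x z ≤ 12/π^2 * (x⁻¹ * x⁻¹) := by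
  have hx0 : (0:ℝ) < x := by linarith
  have hxi0 : (0:ℝ) ≤ x⁻¹ := by positivity
  set S : Set ℝ := {w | 1 - x⁻¹ < |w|} with hSdef
  have hS : MeasurableSet S := measurableSet_lt measurable_const (measurable_id.abs)
  have key : ∫ w in Set.Ioo (-1:ℝ) 1, psi0 w x z
      ≤ ∫ w in Set.Ioo (-1:ℝ) 1, S.indicator (fun _ => 12/π^2 * x⁻¹) w := by
    apply integral_mono_of_nonneg
    · exact (ae_restrict_iff' measurableSet_Ioo).mpr (.of_forall fun w hw =>
        psi0_nonneg x hw.1 hw.2 hz hz1)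
    · refine (integrable_indicator_iff hS).mpr ?_
      exact (integrableOn_const_iff).mpr (Or.inr (by
        rw [Measure.restrict_apply hS]
        exact lt_of_le_of_lt (measure_mono Set.inter_subset_right) measure_Ioo_lt_top))
    · refine (ae_restrict_iff' measurableSet_Ioo).mpr (.of_forall fun w hw => ?_)
      have := psi0_le_refined x hw.1 hw.2 hz hz1 hz2 hx1
      rw [Set.indicator_apply]
      simpa [hSdef, Set.mem_setOf_eq] using this
  have hval : ∫ w in Set.Ioo (-1:ℝ) 1, S.indicator (fun _ => 12/π^2 * x⁻¹) w
      = ((volume.restrict (Set.Ioo (-1:ℝ) 1)) S).toReal * (12/π^2 * x⁻¹) := by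
    rw [integral_indicator_const _ hS]
    simp [smul_eq_mul]
    exact Or.inl rfl
  have hsub : S ∩ Set.Ioo (-1:ℝ) 1 ⊆ Set.Ioo (-1:ℝ) (x⁻¹ - 1) ∪ Set.Ioo (1 - x⁻¹) 1 := by
    rintro w ⟨hwS, hw1, hw2⟩
    have h' : 1 - x⁻¹ < |w| := hwS
    rcases abs_cases w with ⟨e, _⟩ | ⟨e, _⟩
    · rw [e] at h'; right; exact ⟨by linarith, hw2⟩
    · rw [e] at h'; left; exact ⟨hw1, by linarith⟩
  have hvol : ((volume.restrict (Set.Ioo (-1:ℝ) 1)) S).toReal ≤ x⁻¹ + x⁻¹ := by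
    rw [Measure.restrict_apply hS]
    have h1 : volume (S ∩ Set.Ioo (-1:ℝ) 1)
        ≤ ENNReal.ofReal x⁻¹ + ENNReal.ofReal x⁻¹ := by
      refine le_trans (measure_mono hsub) (le_trans (measure_union_le _ _) ?_)
      rw [Real.volume_Ioo, Real.volume_Ioo]
      exact add_le_add (ENNReal.ofReal_le_ofReal (by linarith))
        (ENNReal.ofReal_le_ofReal (by linarith))
    calc (volume (S ∩ Set.Ioo (-1:ℝ) 1)).toReal
        ≤ (ENNReal.ofReal x⁻¹ + ENNReal.ofReal x⁻¹).toReal := by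
          apply ENNReal.toReal_mono (by finiteness) h1
      _ = x⁻¹ + x⁻¹ := by
          rw [ENNReal.toReal_add (by finiteness) (by finiteness),
            ENNReal.toReal_ofReal hxi0]
    
  unfold psi0bar
  calc (1/2) * ∫ w in Set.Ioo (-1:ℝ) 1, psi0 w x z
      ≤ (1/2) * (((volume.restrict (Set.Ioo (-1:ℝ) 1)) S).toReal * (12/π^2 * x⁻¹)) := by
        rw [← hval]; linarith [key]
    _ ≤ (1/2) * ((x⁻¹ + x⁻¹) * (12/π^2 * x⁻¹)) := by
        apply mul_le_mul_of_nonneg_left _ (by norm_num)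
        apply mul_le_mul_of_nonneg_right hvol (by positivity)
    _ = 12/π^2 * (x⁻¹ * x⁻¹) := by ring

end psi0barLemmas

lemma psi0bar_measurable : StronglyMeasurable (fun q : ℝ × ℝ => psi0bar q.1 q.2) := by
  have hm : Measurable fun r : (ℝ × ℝ) × ℝ => psi0 r.2 r.1.1 r.1.2 :=
    psi0_measurable.comp (measurable_snd.prodMk
      ((measurable_fst.comp measurable_fst).prodMk (measurable_snd.comp measurable_fst)))
  have := hm.stronglyMeasurable.integral_prod_right'
    (ν := volume.restrict (Set.Ioo (-1:ℝ) 1))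
  exact (stronglyMeasurable_const.mul this : _)


lemma Jval {a b : ℝ} (ha : 0 < a) (hab : a ≤ b) :
    ∫ t in Set.Ioc a b, 12/π^2 * (t⁻¹*t⁻¹) = 12/π^2 * (a⁻¹ - b⁻¹) := by
  have he : ∀ t : ℝ, (12:ℝ)/π^2 * (t⁻¹*t⁻¹) = 12/π^2 * t ^ (-2 : ℤ) := fun t => by
    rw [zpow_neg, zpow_two, mul_inv]
  simp_rw [he]
  rw [← intervalIntegral.integral_of_le hab, intervalIntegral.integral_const_mul]
  rw [integral_zpow (Or.inr ⟨by norm_num,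
    Set.notMem_uIcc_of_lt ha (lt_of_lt_of_le ha hab)⟩)]
  norm_num
  ring

lemma logval {b : ℝ} (hb : 1 ≤ b) :
    ∫ t in Set.Ioc (1:ℝ) b, 24/π^2 * t⁻¹ = 24/π^2 * Real.log b := by
  rw [← intervalIntegral.integral_of_le hb, intervalIntegral.integral_const_mul,
    integral_inv (Set.notMem_uIcc_of_lt one_pos (lt_of_lt_of_le one_pos hb)), div_one]

section PsiCTLemmas


variable {z : ℝ}

lemma PsiCT_nonneg (hz : -1 < z) (hz1 : z < 1) (x : ℝ) : 0 ≤ PsiCT x z := by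
  unfold PsiCT
  apply mul_nonneg (by norm_num)
  exact setIntegral_nonneg measurableSet_Ioi fun t _ => psi0bar_nonneg hz hz1 t

lemma PsiCT_eq_zero (hz : -1 < z) (hz1 : z < 1) {x : ℝ}
    (hx1 : 1 ≤ x) (hxX : 1/(1-|z|) ≤ x) : PsiCT x z = 0 := by
  unfold PsiCT
  rw [setIntegral_congr_fun measurableSet_Ioi
    (fun t (ht : x < t) => psi0bar_eq_zero hz hz1 (by linarith) (by linarith) :
      Set.EqOn (fun t => psi0bar t z) (fun _ => (0:ℝ)) (Set.Ioi x))]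
  simp

/-- Case A : `|z| ≤ 1/2`. -/
lemma psi0bar_bound_A (hz : -1 < z) (hz1 : z < 1) (hzA : |z| ≤ 1/2) {t : ℝ} (ht : 0 < t) :
    psi0bar t z ≤ (Set.Ioo (0:ℝ) 2).indicator (fun _ => (6/π^2 : ℝ)) t := by
  have hza : |z| < 1 := abs_lt.mpr ⟨hz, hz1⟩
  by_cases h2 : t < 2
  · rw [Set.indicator_of_mem (Set.mem_Ioo.mpr ⟨ht, h2⟩)]
    exact psi0bar_le hz hz1 t
  · push_neg at h2
    rw [Set.indicator_of_notMem (fun hm => absurd hm.2 (not_lt.mpr h2))]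
    rw [psi0bar_eq_zero hz hz1 (by linarith)]
    calc 1/(1-|z|) ≤ 1/(1/2) := one_div_le_one_div_of_le (by norm_num) (by linarith)
    _ ≤ t := by norm_num; linarith

lemma PsiCT_le_A (hz : -1 < z) (hz1 : z < 1) (hzA : |z| ≤ 1/2) {x : ℝ} (hx : 0 < x) :
    PsiCT x z ≤ 24/π^2 := by
  have hind : IntegrableOn ((Set.Ioo (0:ℝ) 2).indicator (fun _ => (6/π^2 : ℝ))) (Set.Ioi x) := by
    refine (integrable_indicator_iff measurableSet_Ioo).mpr ?_
    exact (integrableOn_const_iff).mpr (Or.inr (by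
      rw [Measure.restrict_apply measurableSet_Ioo]
      exact lt_of_le_of_lt (measure_mono Set.inter_subset_left) measure_Ioo_lt_top))
  have key : ∫ t in Set.Ioi x, psi0bar t z
      ≤ ∫ t in Set.Ioi x, (Set.Ioo (0:ℝ) 2).indicator (fun _ => (6/π^2 : ℝ)) t := by
    apply integral_mono_of_nonneg
    · exact (ae_restrict_iff' measurableSet_Ioi).mpr (.of_forall fun t _ =>
        psi0bar_nonneg hz hz1 t)
    · exact hind
    · exact (ae_restrict_iff' measurableSet_Ioi).mpr (.of_forall fun t ht =>
        psi0bar_bound_A hz hz1 hzA (lt_trans hx ht))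
  have hval : ∫ t in Set.Ioi x, (Set.Ioo (0:ℝ) 2).indicator (fun _ => (6/π^2 : ℝ)) t
      ≤ 2 * (6/π^2) := by
    rw [setIntegral_indicator measurableSet_Ioo, setIntegral_const, smul_eq_mul]
    apply mul_le_mul_of_nonneg_right _ six_pi_pos.le
    have : volume (Set.Ioi x ∩ Set.Ioo (0:ℝ) 2) ≤ ENNReal.ofReal 2 := by
      refine le_trans (measure_mono Set.inter_subset_right) ?_
      rw [Real.volume_Ioo]
      exact ENNReal.ofReal_le_ofReal (by norm_num)
    calc (volume (Set.Ioi x ∩ Set.Ioo (0:ℝ) 2)).toReal ≤ (ENNReal.ofReal 2).toReal :=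
        ENNReal.toReal_mono (by finiteness) this
    _ = 2 := ENNReal.toReal_ofReal (by norm_num)
  unfold PsiCT
  calc 2 * ∫ t in Set.Ioi x, psi0bar t z ≤ 2 * (2 * (6/π^2)) := by linarith
  _ = 24/π^2 := by ring

lemma PsiBarMarg_le_A (hz : -1 < z) (hz1 : z < 1) (hzA : |z| ≤ 1/2) :
    PsiBarMarg z ≤ 48/π^2 := by
  have hza : |z| < 1 := abs_lt.mpr ⟨hz, hz1⟩
  have hind : IntegrableOn ((Set.Ioo (0:ℝ) 2).indicator (fun _ => (24/π^2 : ℝ))) (Set.Ioi 0) := by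
    refine (integrable_indicator_iff measurableSet_Ioo).mpr ?_
    exact (integrableOn_const_iff).mpr (Or.inr (by
      rw [Measure.restrict_apply measurableSet_Ioo]
      exact lt_of_le_of_lt (measure_mono Set.inter_subset_left) measure_Ioo_lt_top))
  have key : PsiBarMarg z
      ≤ ∫ x in Set.Ioi (0:ℝ), (Set.Ioo (0:ℝ) 2).indicator (fun _ => (24/π^2 : ℝ)) x := by
    unfold PsiBarMarg
    apply integral_mono_of_nonneg
    · exact (ae_restrict_iff' measurableSet_Ioi).mpr (.of_forall fun x _ =>
        PsiCT_nonneg hz hz1 x)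
    · exact hind
    · refine (ae_restrict_iff' measurableSet_Ioi).mpr (.of_forall fun x hx => ?_)
      by_cases h2 : x < 2
      · rw [Set.indicator_of_mem (Set.mem_Ioo.mpr ⟨hx, h2⟩)]
        exact PsiCT_le_A hz hz1 hzA hx
      · push_neg at h2
        rw [Set.indicator_of_notMem (fun hm => absurd hm.2 (not_lt.mpr h2))]
        refine le_of_eq (PsiCT_eq_zero hz hz1 (by linarith) ?_)
        calc 1/(1-|z|) ≤ 1/(1/2) := one_div_le_one_div_of_le (by norm_num) (by linarith)
        _ ≤ x := by norm_num; linarith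
  have hval : ∫ x in Set.Ioi (0:ℝ), (Set.Ioo (0:ℝ) 2).indicator (fun _ => (24/π^2 : ℝ)) x
      = 2 * (24/π^2) := by
    rw [setIntegral_indicator measurableSet_Ioo, setIntegral_const, smul_eq_mul,
      Set.inter_eq_right.mpr (fun t ht => ht.1), measureReal_def, Real.volume_Ioo,
      show (2:ℝ) - 0 = 2 by norm_num, ENNReal.toReal_ofReal (by norm_num)]
  rw [hval] at key
  calc PsiBarMarg z ≤ 2*(24/π^2) := key
  _ = 48/π^2 := by ring

end PsiCTLemmas

section CaseB


variable {z : ℝ}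

lemma inv_sq_integrable (X : ℝ) :
    Integrable ((Set.Ico (1:ℝ) X).indicator (fun t => 12/π^2 * (t⁻¹*t⁻¹))) := by
  refine (integrable_indicator_iff measurableSet_Ico).mpr ?_
  refine IntegrableOn.mono_set ?_ Set.Ico_subset_Icc_self
  apply ContinuousOn.integrableOn_compact isCompact_Icc
  refine continuousOn_const.mul (ContinuousOn.mul ?_ ?_) <;>
    exact ContinuousOn.inv₀ continuousOn_id
      (fun t ht => ne_of_gt (lt_of_lt_of_le one_pos ht.1))

lemma inv_integrable (X : ℝ) :
    Integrable ((Set.Ico (1:ℝ) X).indicator (fun t => 24/π^2 * t⁻¹)) := by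
  refine (integrable_indicator_iff measurableSet_Ico).mpr ?_
  refine IntegrableOn.mono_set ?_ Set.Ico_subset_Icc_self
  apply ContinuousOn.integrableOn_compact isCompact_Icc
  exact continuousOn_const.mul (ContinuousOn.inv₀ continuousOn_id
    (fun t ht => ne_of_gt (lt_of_lt_of_le one_pos ht.1)))

lemma one_ind_integrable (c : ℝ) :
    Integrable ((Set.Ioo (0:ℝ) 1).indicator (fun _ => c)) := by
  refine (integrable_indicator_iff measurableSet_Ioo).mpr ?_
  exact (integrableOn_const_iff).mpr (Or.inr measure_Ioo_lt_top)

lemma psi0bar_bound_B (hz : -1 < z) (hz1 : z < 1) (hzB : 1/2 ≤ |z|) {t : ℝ} (ht : 0 < t) :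
    psi0bar t z ≤ (Set.Ioo (0:ℝ) 1).indicator (fun _ => (6/π^2:ℝ)) t
      + (Set.Ico (1:ℝ) (1/(1-|z|))).indicator (fun t => 12/π^2 * (t⁻¹*t⁻¹)) t := by
  rcases lt_or_ge t 1 with h1 | h1
  · rw [Set.indicator_of_mem (Set.mem_Ioo.mpr ⟨ht, h1⟩),
      Set.indicator_of_notMem (fun hm => absurd hm.1 (not_le.mpr h1))]
    simpa using psi0bar_le hz hz1 t
  · rw [Set.indicator_of_notMem (fun hm => absurd hm.2 (not_lt.mpr h1)), zero_add]
    rcases lt_or_ge t (1/(1-|z|)) with h2 | h2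
    · rw [Set.indicator_of_mem (Set.mem_Ico.mpr ⟨h1, h2⟩)]
      exact psi0bar_le_refined hz hz1 hzB h1
    · rw [Set.indicator_of_notMem (fun hm => absurd hm.2 (not_lt.mpr h2))]
      exact le_of_eq (psi0bar_eq_zero hz hz1 h1 h2)

lemma X_ge_two (hz : -1 < z) (hz1 : z < 1) (hzB : 1/2 ≤ |z|) : 2 ≤ 1/(1-|z|) := by
  have hza : |z| < 1 := abs_lt.mpr ⟨hz, hz1⟩
  rw [le_div_iff₀ (by linarith)]
  linarith

lemma PsiCT_le_B1 (hz : -1 < z) (hz1 : z < 1) (hzB : 1/2 ≤ |z|) {x : ℝ} (hx : 0 < x) :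
    PsiCT x z ≤ 36/π^2 := by
  have hza : |z| < 1 := abs_lt.mpr ⟨hz, hz1⟩
  set X : ℝ := 1/(1-|z|) with hX
  have hX2 : 2 ≤ X := X_ge_two hz hz1 hzB
  set hfun : ℝ → ℝ := fun t => (Set.Ioo (0:ℝ) 1).indicator (fun _ => (6/π^2:ℝ)) t
      + (Set.Ico (1:ℝ) X).indicator (fun t => 12/π^2 * (t⁻¹*t⁻¹)) t with hfdef
  have hfint : Integrable hfun := (one_ind_integrable _).add (inv_sq_integrable _)
  have hfnn : ∀ t, 0 ≤ hfun t := by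
    intro t
    apply add_nonneg <;> apply Set.indicator_nonneg <;> intro a _
    · positivity
    · exact mul_nonneg (by positivity) (mul_self_nonneg _)
  have key : ∫ t in Set.Ioi x, psi0bar t z ≤ ∫ t in Set.Ioi x, hfun t := by
    apply integral_mono_of_nonneg
    · exact (ae_restrict_iff' measurableSet_Ioi).mpr (.of_forall fun t _ =>
        psi0bar_nonneg hz hz1 t)
    · exact hfint.integrableOn
    · exact (ae_restrict_iff' measurableSet_Ioi).mpr (.of_forall fun t ht =>
        psi0bar_bound_B hz hz1 hzB (lt_trans hx ht))
  have mono : ∫ t in Set.Ioi x, hfun t ≤ ∫ t in Set.Ioi (0:ℝ), hfun t := by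
    apply setIntegral_mono_set hfint.integrableOn (.of_forall fun t => hfnn t)
    exact HasSubset.Subset.eventuallyLE (Set.Ioi_subset_Ioi hx.le)
  have hval : ∫ t in Set.Ioi (0:ℝ), hfun t ≤ 18/π^2 := by
    rw [hfdef, integral_add ((one_ind_integrable _).integrableOn)
      ((inv_sq_integrable _).integrableOn)]
    have e1 : ∫ t in Set.Ioi (0:ℝ), (Set.Ioo (0:ℝ) 1).indicator (fun _ => (6/π^2:ℝ)) t
        = 6/π^2 := by
      rw [setIntegral_indicator measurableSet_Ioo,
        Set.inter_eq_right.mpr (fun t ht => ht.1), setIntegral_const, smul_eq_mul,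
        measureReal_def, Real.volume_Ioo, show (1:ℝ) - 0 = 1 by norm_num, ENNReal.toReal_ofReal (by norm_num)]
      ring
    have e2 : ∫ t in Set.Ioi (0:ℝ), (Set.Ico (1:ℝ) X).indicator (fun t => 12/π^2*(t⁻¹*t⁻¹)) t
        = 12/π^2 * (1 - X⁻¹) := by
      have hss : Set.Ioi (0:ℝ) ∩ Set.Ico (1:ℝ) X = Set.Ico (1:ℝ) X :=
        Set.inter_eq_right.mpr (fun t ht => lt_of_lt_of_le one_pos ht.1)
      rw [setIntegral_indicator measurableSet_Ico, hss,
        integral_Ico_eq_integral_Ioo, ← integral_Ioc_eq_integral_Ioo,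
        Jval one_pos (by linarith)]
      norm_num
    rw [e1, e2]
    have hXi : (0:ℝ) ≤ X⁻¹ := by positivity
    have h2 : 12/π^2 * (1 - X⁻¹) ≤ 12/π^2 * 1 :=
      mul_le_mul_of_nonneg_left (by linarith) (by positivity)
    have e3 : (6:ℝ)/π^2 + 12/π^2 * 1 = 18/π^2 := by ring
    linarith
  have hfin : ∫ t in Set.Ioi x, psi0bar t z ≤ 18/π^2 := le_trans key (le_trans mono hval)
  unfold PsiCT
  calc 2 * ∫ x' in Set.Ioi x, psi0bar x' z ≤ 2 * (18/π^2) :=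
        mul_le_mul_of_nonneg_left hfin (by norm_num)
    _ = 36/π^2 := by ring

lemma PsiCT_le_B2 (hz : -1 < z) (hz1 : z < 1) (hzB : 1/2 ≤ |z|) {x : ℝ} (hx1 : 1 ≤ x) :
    PsiCT x z ≤ 24/π^2 * x⁻¹ := by
  have hza : |z| < 1 := abs_lt.mpr ⟨hz, hz1⟩
  have hx0 : (0:ℝ) < x := by linarith
  set X : ℝ := 1/(1-|z|) with hX
  rcases le_or_gt X x with hXx | hxX
  · rw [PsiCT_eq_zero hz hz1 hx1 hXx]
    exact mul_nonneg (by positivity) (inv_nonneg.mpr hx0.le)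
  · have hpt : ∀ t, x < t → psi0bar t z
        ≤ (Set.Ico (1:ℝ) X).indicator (fun t => 12/π^2 * (t⁻¹*t⁻¹)) t := by
      intro t ht
      have ht1 : 1 ≤ t := le_trans hx1 (le_of_lt ht)
      rcases lt_or_ge t X with h2 | h2
      · rw [Set.indicator_of_mem (Set.mem_Ico.mpr ⟨ht1, h2⟩)]
        exact psi0bar_le_refined hz hz1 hzB ht1
      · rw [Set.indicator_of_notMem (fun hm => absurd hm.2 (not_lt.mpr h2))]
        exact le_of_eq (psi0bar_eq_zero hz hz1 ht1 h2)
    have key : ∫ t in Set.Ioi x, psi0bar t z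
        ≤ ∫ t in Set.Ioi x, (Set.Ico (1:ℝ) X).indicator (fun t => 12/π^2 * (t⁻¹*t⁻¹)) t := by
      apply integral_mono_of_nonneg
      · exact (ae_restrict_iff' measurableSet_Ioi).mpr (.of_forall fun t _ =>
          psi0bar_nonneg hz hz1 t)
      · exact (inv_sq_integrable _).integrableOn
      · exact (ae_restrict_iff' measurableSet_Ioi).mpr (.of_forall fun t ht => hpt t ht)
    have hseteq : Set.Ioi x ∩ Set.Ico (1:ℝ) X = Set.Ioo x X := by
      ext t
      simp only [Set.mem_inter_iff, Set.mem_Ioi, Set.mem_Ico, Set.mem_Ioo]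
      constructor
      · rintro ⟨h1, _, h3⟩; exact ⟨h1, h3⟩
      · rintro ⟨h1, h2⟩; exact ⟨h1, le_trans hx1 h1.le, h2⟩
    have hval : ∫ t in Set.Ioi x, (Set.Ico (1:ℝ) X).indicator (fun t => 12/π^2 * (t⁻¹*t⁻¹)) t
        = 12/π^2 * (x⁻¹ - X⁻¹) := by
      rw [setIntegral_indicator measurableSet_Ico, hseteq,
        ← integral_Ioc_eq_integral_Ioo, Jval hx0 hxX.le]
    have hX2 : 2 ≤ X := X_ge_two hz hz1 hzB
    have hXinv : (0:ℝ) ≤ X⁻¹ := inv_nonneg.mpr (by linarith)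
    have h24 : (0:ℝ) < 24/π^2 := by positivity
    rw [hval] at key
    unfold PsiCT
    calc 2 * ∫ x' in Set.Ioi x, psi0bar x' z ≤ 2 * (12/π^2 * (x⁻¹ - X⁻¹)) :=
          mul_le_mul_of_nonneg_left key (by norm_num)
      _ = 24/π^2 * x⁻¹ - 24/π^2 * X⁻¹ := by ring
      _ ≤ 24/π^2 * x⁻¹ := by linarith [mul_nonneg h24.le hXinv]
end CaseB

lemma PsiBarMarg_le_B (hz : -1 < z) (hz1 : z < 1) (hzB : 1/2 ≤ |z|) :
    PsiBarMarg z ≤ 36/π^2 + 24/π^2 * Real.log (1/(1-|z|)) := by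
  have hza : |z| < 1 := abs_lt.mpr ⟨hz, hz1⟩
  set X : ℝ := 1/(1-|z|) with hX
  have hX2 : 2 ≤ X := X_ge_two hz hz1 hzB
  have hpt : ∀ x : ℝ, 0 < x → PsiCT x z
      ≤ (Set.Ioo (0:ℝ) 1).indicator (fun _ => (36/π^2:ℝ)) x
        + (Set.Ico (1:ℝ) X).indicator (fun x => 24/π^2 * x⁻¹) x := by
    intro x hx
    rcases lt_or_ge x 1 with h1 | h1
    · rw [Set.indicator_of_mem (Set.mem_Ioo.mpr ⟨hx, h1⟩),
        Set.indicator_of_notMem (fun hm => absurd hm.1 (not_le.mpr h1))]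
      simpa using PsiCT_le_B1 hz hz1 hzB hx
    · rw [Set.indicator_of_notMem (fun hm => absurd hm.2 (not_lt.mpr h1)), zero_add]
      rcases lt_or_ge x X with h2 | h2
      · rw [Set.indicator_of_mem (Set.mem_Ico.mpr ⟨h1, h2⟩)]
        exact PsiCT_le_B2 hz hz1 hzB h1
      · rw [Set.indicator_of_notMem (fun hm => absurd hm.2 (not_lt.mpr h2))]
        exact le_of_eq (PsiCT_eq_zero hz hz1 h1 h2)
  have key : PsiBarMarg z ≤ ∫ x in Set.Ioi (0:ℝ),
      ((Set.Ioo (0:ℝ) 1).indicator (fun _ => (36/π^2:ℝ)) x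
        + (Set.Ico (1:ℝ) X).indicator (fun x => 24/π^2 * x⁻¹) x) := by
    unfold PsiBarMarg
    apply integral_mono_of_nonneg
    · exact (ae_restrict_iff' measurableSet_Ioi).mpr (.of_forall fun x _ =>
        PsiCT_nonneg hz hz1 x)
    · exact ((one_ind_integrable _).add (inv_integrable _)).integrableOn
    · exact (ae_restrict_iff' measurableSet_Ioi).mpr (.of_forall fun x hx => hpt x hx)
  have hval : ∫ x in Set.Ioi (0:ℝ),
      ((Set.Ioo (0:ℝ) 1).indicator (fun _ => (36/π^2:ℝ)) x
        + (Set.Ico (1:ℝ) X).indicator (fun x => 24/π^2 * x⁻¹) x)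
      = 36/π^2 + 24/π^2 * Real.log X := by
    rw [integral_add ((one_ind_integrable _).integrableOn) ((inv_integrable _).integrableOn)]
    have e1 : ∫ x in Set.Ioi (0:ℝ), (Set.Ioo (0:ℝ) 1).indicator (fun _ => (36/π^2:ℝ)) x
        = 36/π^2 := by
      rw [setIntegral_indicator measurableSet_Ioo,
        Set.inter_eq_right.mpr (fun t ht => ht.1), setIntegral_const, smul_eq_mul,
        measureReal_def, Real.volume_Ioo, show (1:ℝ) - 0 = 1 by norm_num, ENNReal.toReal_ofReal (by norm_num)]
      ring
    have e2 : ∫ x in Set.Ioi (0:ℝ), (Set.Ico (1:ℝ) X).indicator (fun x => 24/π^2 * x⁻¹) x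
        = 24/π^2 * Real.log X := by
      have hss : Set.Ioi (0:ℝ) ∩ Set.Ico (1:ℝ) X = Set.Ico (1:ℝ) X :=
        Set.inter_eq_right.mpr (fun t ht => lt_of_lt_of_le one_pos ht.1)
      rw [setIntegral_indicator measurableSet_Ico, hss,
        integral_Ico_eq_integral_Ioo, ← integral_Ioc_eq_integral_Ioo,
        logval (by linarith)]
    rw [e1, e2]
  rw [hval] at key
  exact key

lemma PsiCT_measurable : StronglyMeasurable (fun q : ℝ × ℝ => PsiCT q.1 q.2) := by
  set F : (ℝ × ℝ) → ℝ → ℝ := fun q t => (Set.Ioi q.1).indicator (fun t => psi0bar t q.2) t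
    with hF
  have hm : Measurable (Function.uncurry F) := by
    have heq : Function.uncurry F
        = fun r : (ℝ × ℝ) × ℝ => Set.indicator {s : (ℝ × ℝ) × ℝ | s.1.1 < s.2}
            (fun s => psi0bar s.2 s.1.2) r := by
      ext r
      simp only [Function.uncurry, hF, Set.indicator_apply, Set.mem_Ioi, Set.mem_setOf_eq]
    rw [heq]
    apply Measurable.indicator
    · exact psi0bar_measurable.measurable.comp
        (measurable_snd.prodMk (measurable_snd.comp measurable_fst))
    · exact measurableSet_lt (measurable_fst.comp measurable_fst) measurable_snd
  have key : ∀ q : ℝ × ℝ, PsiCT q.1 q.2 = 2 * ∫ t, F q t := by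
    intro q
    unfold PsiCT
    rw [hF, integral_indicator measurableSet_Ioi]
  simp_rw [key]
  exact stronglyMeasurable_const.mul (hm.stronglyMeasurable.integral_prod_right
    (ν := (volume : Measure ℝ)))


attribute [irreducible] PsiCT psi0bar psi0 in
lemma PsiBarMarg_measurable' :
    StronglyMeasurable (fun z : ℝ => ∫ x in Set.Ioi (0:ℝ), PsiCT x z) := by
  have hm : Measurable fun r : ℝ × ℝ => PsiCT r.2 r.1 :=
    PsiCT_measurable.measurable.comp (measurable_snd.prodMk measurable_fst)
  exact hm.stronglyMeasurable.integral_prod_right'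
    (ν := volume.restrict (Set.Ioi (0:ℝ)))

lemma PsiBarMarg_measurable : StronglyMeasurable PsiBarMarg := PsiBarMarg_measurable'


lemma PsiBarMarg_nonneg {z : ℝ} (hz : -1 < z) (hz1 : z < 1) : 0 ≤ PsiBarMarg z := by
  unfold PsiBarMarg
  exact setIntegral_nonneg measurableSet_Ioi fun x _ => PsiCT_nonneg hz hz1 x

lemma PsiBarMarg_le {z : ℝ} (hz : -1 < z) (hz1 : z < 1) :
    PsiBarMarg z ≤ 48/π^2 * (1 + Real.log (1/(1-|z|))) := by
  have hza : |z| < 1 := abs_lt.mpr ⟨hz, hz1⟩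
  have hL : 0 ≤ Real.log (1/(1-|z|)) := by
    apply Real.log_nonneg
    rw [le_div_iff₀ (by linarith)]
    linarith [abs_nonneg z]
  set L := Real.log (1/(1-|z|)) with hLdef
  have hmul : 0 ≤ 24/π^2 * L := mul_nonneg (by positivity) hL
  rcases le_or_gt (|z|) (1/2) with hA | hB
  · have := PsiBarMarg_le_A hz hz1 hA
    have e : 48/π^2 * (1 + L) = 48/π^2 + 2*(24/π^2 * L) := by ring
    rw [e]; linarith
  · have := PsiBarMarg_le_B hz hz1 hB.le
    have e : 48/π^2 * (1 + L) = 36/π^2 + 24/π^2 * L + (12/π^2 + 24/π^2 * L) := by ring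
    rw [e]
    have h12 : (0:ℝ) < 12/π^2 := by positivity
    linarith

lemma log_le_rpow {u : ℝ} (hu : 0 < u) :
    Real.log (1/u) ≤ 2 * u ^ (-(1/2) : ℝ) := by
  have hs : 0 < Real.sqrt u := Real.sqrt_pos.mpr hu
  have h1 : Real.log ((Real.sqrt u)⁻¹) ≤ (Real.sqrt u)⁻¹ - 1 :=
    Real.log_le_sub_one_of_pos (by positivity)
  have h2 : Real.log ((Real.sqrt u)⁻¹) = - (Real.log u / 2) := by
    rw [Real.log_inv, Real.log_sqrt hu.le]
  have h3 : u ^ (-(1/2) : ℝ) = (Real.sqrt u)⁻¹ := by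
    rw [Real.rpow_neg hu.le, Real.sqrt_eq_rpow]
  rw [one_div, Real.log_inv, h3]
  rw [h2] at h1
  linarith

lemma rpow_int : IntegrableOn (fun z : ℝ => (1 - |z|) ^ (-(1/2) : ℝ)) (Set.Ioo (-1:ℝ) 1) := by
  have hI : IntervalIntegrable (fun t : ℝ => t ^ (-(1/2) : ℝ)) volume 0 1 :=
    intervalIntegral.intervalIntegrable_rpow' (by norm_num)
  have hpos : IntegrableOn (fun z : ℝ => (1 - |z|) ^ (-(1/2) : ℝ)) (Set.Ioc (0:ℝ) 1) := by
    have h1 : IntervalIntegrable (fun x : ℝ => (1 - x) ^ (-(1/2) : ℝ)) volume 0 1 := by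
      have := hI.comp_sub_left 1
      simpa using this.symm
    have h2 : IntegrableOn (fun x : ℝ => (1 - x) ^ (-(1/2) : ℝ)) (Set.Ioc (0:ℝ) 1) :=
      (intervalIntegrable_iff_integrableOn_Ioc_of_le (by norm_num)).mp h1
    refine h2.congr_fun (fun z hz => ?_) measurableSet_Ioc
    rw [abs_of_pos hz.1]
  have hneg : IntegrableOn (fun z : ℝ => (1 - |z|) ^ (-(1/2) : ℝ)) (Set.Ioc (-1:ℝ) 0) := by
    have h1 : IntervalIntegrable (fun x : ℝ => (1 + x) ^ (-(1/2) : ℝ)) volume (-1) 0 := by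
      have := hI.comp_add_left 1
      simpa using this
    have h2 : IntegrableOn (fun x : ℝ => (1 + x) ^ (-(1/2) : ℝ)) (Set.Ioc (-1:ℝ) 0) :=
      (intervalIntegrable_iff_integrableOn_Ioc_of_le (by norm_num)).mp h1
    refine h2.congr_fun (fun z hz => ?_) measurableSet_Ioc
    rw [abs_of_nonpos hz.2]
    ring_nf
  refine IntegrableOn.mono_set (hneg.union hpos) ?_
  intro t ht
  rcases le_or_gt t 0 with h | h
  · exact Or.inl ⟨ht.1, h⟩
  · exact Or.inr ⟨h, ht.2.le⟩

lemma G_integrable : IntegrableOn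
    (fun z : ℝ => 48/π^2 + 96/π^2 * (1 - |z|) ^ (-(1/2) : ℝ)) (Set.Ioo (-1:ℝ) 1) := by
  apply Integrable.add
  · exact (integrableOn_const_iff).mpr (Or.inr measure_Ioo_lt_top)
  · exact (rpow_int.const_mul _)


/-- The marginal density `Ψ̄` of the continuous-time initial distribution satisfies a
logarithmic bound and is integrable on `(−1,1)`. -/
theorem stmt3 :
    ∃ C : ℝ, (∀ z ∈ Set.Ioo (-1 : ℝ) 1,
        PsiBarMarg z ≤ C * (1 + Real.log (1 / (1 - |z|)))) ∧
      IntegrableOn PsiBarMarg (Set.Ioo (-1 : ℝ) 1) volume := by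
  refine ⟨48/π^2, fun z hz => PsiBarMarg_le hz.1 hz.2, ?_⟩
  apply Integrable.mono' G_integrable
    (PsiBarMarg_measurable.aestronglyMeasurable.restrict)
  refine (ae_restrict_iff' measurableSet_Ioo).mpr (.of_forall fun z hz => ?_)
  have hza : |z| < 1 := abs_lt.mpr ⟨hz.1, hz.2⟩
  have h0 : 0 < 1 - |z| := by linarith
  rw [Real.norm_eq_abs, abs_of_nonneg (PsiBarMarg_nonneg hz.1 hz.2)]
  calc PsiBarMarg z ≤ 48/π^2 * (1 + Real.log (1/(1-|z|))) := PsiBarMarg_le hz.1 hz.2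
    _ ≤ 48/π^2 * (1 + 2 * (1-|z|) ^ (-(1/2) : ℝ)) := by
        apply mul_le_mul_of_nonneg_left _ (by positivity)
        linarith [log_le_rpow h0]
    _ = 48/π^2 + 96/π^2 * (1-|z|) ^ (-(1/2) : ℝ) := by ring
end
end

section
/- (Doeblin spectral gap.) Let (Ω, 𝔉, μ) be a probability space, J ∈ [0,1] a constant, and k : Ω × Ω → ℝ a measurable function satisfying k(x,y) = k(y,x) for all x, y, k(x,y) ≥ J for all x, y, and ∫ k(x,y) dμ(y) = 1 for every x ∈ Ω. Then the integral operator P on L²(Ω, μ) defined by (Pf)(x) := ∫ k(x,y) f(y) dμ(y) is a bounded self-adjoint operator, and, with Π the rank-one projection (Πf)(x) := ∫ f dμ, the operator norm satisfies ‖P − Π‖_{L²(μ) → L²(μ)} ≤ 1 − J. -/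
open MeasureTheory Function
open scoped ENNReal

namespace DoeblinAux

variable {Ω : Type*} [MeasurableSpace Ω] {μ : Measure Ω} [IsProbabilityMeasure μ]

lemma hsq (a : ℝ≥0∞) : (a ^ (1/2 : ℝ)) ^ (2 : ℝ) = a := by
  rw [← ENNReal.rpow_mul]; norm_num

lemma hsplit (a : ℝ≥0∞) : a ^ (1/2 : ℝ) * a ^ (1/2 : ℝ) = a := by
  rw [← ENNReal.rpow_add_of_nonneg _ _ (by norm_num) (by norm_num)]; norm_num

lemma keyAux {h : Ω → Ω → ℝ} (hm : Measurable (Function.uncurry h))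
    (hpos : ∀ x y, 0 ≤ h x y) (hsymm : ∀ x y, h x y = h y x)
    {C : ℝ≥0∞} (hC : C ≠ ∞)
    (hrow : ∀ x, ∫⁻ y, ENNReal.ofReal (h x y) ∂μ = C)
    {f : Ω → ℝ} (hfm : Measurable f) (hf : MemLp f 2 μ) :
    (∀ᵐ x ∂μ, Integrable (fun y => h x y * f y) μ) ∧
      MemLp (fun x => ∫ y, h x y * f y ∂μ) 2 μ ∧
      eLpNorm (fun x => ∫ y, h x y * f y ∂μ) 2 μ ≤ C * eLpNorm f 2 μ := by
  have hmx : ∀ x, Measurable fun y => h x y := fun x =>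
    hm.comp measurable_prodMk_left
  have hmy : ∀ y, Measurable fun x => h x y := fun y =>
    hm.comp measurable_prodMk_right
  have hG : AEMeasurable (fun y => (‖f y‖₊ : ℝ≥0∞)) μ := hfm.nnnorm.coe_nnreal_ennreal.aemeasurable
  have hG2 : AEMeasurable (fun y => (‖f y‖₊ : ℝ≥0∞) ^ (2:ℝ)) μ :=
    ENNReal.continuous_rpow_const.measurable.comp_aemeasurable hG
  -- norm of the integrand
  have hnorm : ∀ x y, (‖h x y * f y‖₊ : ℝ≥0∞) = ENNReal.ofReal (h x y) * ‖f y‖₊ := by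
    intro x y
    rw [nnnorm_mul, ENNReal.coe_mul, ← enorm_eq_nnnorm (h x y), Real.enorm_eq_ofReal (hpos x y)]
  -- Cauchy-Schwarz for each x
  have conj : (2:ℝ).HolderConjugate 2 := Real.HolderConjugate.two_two
  have stepA : ∀ x, ∫⁻ y, ENNReal.ofReal (h x y) * ‖f y‖₊ ∂μ
      ≤ C ^ (1/2:ℝ) * (∫⁻ y, ENNReal.ofReal (h x y) * (‖f y‖₊:ℝ≥0∞) ^ (2:ℝ) ∂μ) ^ (1/2:ℝ) := by
    intro x
    have hHx : Measurable fun y => ENNReal.ofReal (h x y) := (hmx x).ennreal_ofReal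
    have h1 : AEMeasurable (fun y => (ENNReal.ofReal (h x y)) ^ (1/2:ℝ)) μ :=
      (ENNReal.continuous_rpow_const.measurable.comp hHx).aemeasurable
    have h2 : AEMeasurable (fun y => (ENNReal.ofReal (h x y)) ^ (1/2:ℝ) * ‖f y‖₊) μ := h1.mul hG
    have := ENNReal.lintegral_mul_le_Lp_mul_Lq μ conj h1 h2
    simp only [Pi.mul_apply] at this
    calc ∫⁻ y, ENNReal.ofReal (h x y) * ‖f y‖₊ ∂μ
        = ∫⁻ y, (ENNReal.ofReal (h x y)) ^ (1/2:ℝ)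
            * ((ENNReal.ofReal (h x y)) ^ (1/2:ℝ) * ‖f y‖₊) ∂μ := by
          apply lintegral_congr; intro y; rw [← mul_assoc, hsplit]
      _ ≤ (∫⁻ y, ((ENNReal.ofReal (h x y)) ^ (1/2:ℝ)) ^ (2:ℝ) ∂μ) ^ (1/(2:ℝ))
            * (∫⁻ y, ((ENNReal.ofReal (h x y)) ^ (1/2:ℝ) * ‖f y‖₊) ^ (2:ℝ) ∂μ) ^ (1/(2:ℝ)) := this
      _ = C ^ (1/2:ℝ) * (∫⁻ y, ENNReal.ofReal (h x y) * (‖f y‖₊:ℝ≥0∞) ^ (2:ℝ) ∂μ) ^ (1/2:ℝ) := by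
          congr 1
          · rw [lintegral_congr fun y => hsq _, hrow]
          · congr 1
            apply lintegral_congr; intro y
            rw [ENNReal.mul_rpow_of_nonneg _ _ (by norm_num : (0:ℝ) ≤ 2), hsq]
  have stepA' : ∀ x, (∫⁻ y, ENNReal.ofReal (h x y) * ‖f y‖₊ ∂μ) ^ (2:ℝ)
      ≤ C * ∫⁻ y, ENNReal.ofReal (h x y) * (‖f y‖₊:ℝ≥0∞) ^ (2:ℝ) ∂μ := by
    intro x
    calc (∫⁻ y, ENNReal.ofReal (h x y) * ‖f y‖₊ ∂μ) ^ (2:ℝ)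
        ≤ (C ^ (1/2:ℝ) * (∫⁻ y, ENNReal.ofReal (h x y) * (‖f y‖₊:ℝ≥0∞) ^ (2:ℝ) ∂μ) ^ (1/2:ℝ)) ^ (2:ℝ) :=
          ENNReal.rpow_le_rpow (stepA x) (by norm_num)
      _ = C * ∫⁻ y, ENNReal.ofReal (h x y) * (‖f y‖₊:ℝ≥0∞) ^ (2:ℝ) ∂μ := by
          rw [ENNReal.mul_rpow_of_nonneg _ _ (by norm_num : (0:ℝ) ≤ 2), hsq, hsq]
  -- Tonelli
  have hprodmeas : AEMeasurable
      (uncurry fun x y => ENNReal.ofReal (h x y) * (‖f y‖₊:ℝ≥0∞) ^ (2:ℝ)) (μ.prod μ) := by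
    have h1 : Measurable fun z : Ω × Ω => ENNReal.ofReal (h z.1 z.2) := hm.ennreal_ofReal
    have h2 : AEMeasurable (fun z : Ω × Ω => (‖f z.2‖₊ : ℝ≥0∞) ^ (2:ℝ)) (μ.prod μ) :=
      ENNReal.continuous_rpow_const.measurable.comp_aemeasurable (hfm.comp measurable_snd).nnnorm.coe_nnreal_ennreal.aemeasurable
    exact h1.aemeasurable.mul h2
  have hdouble : ∫⁻ x, ∫⁻ y, ENNReal.ofReal (h x y) * (‖f y‖₊:ℝ≥0∞) ^ (2:ℝ) ∂μ ∂μ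
      = C * ∫⁻ y, (‖f y‖₊:ℝ≥0∞) ^ (2:ℝ) ∂μ := by
    rw [lintegral_lintegral_swap hprodmeas]
    have hcol : ∀ y, ∫⁻ x, ENNReal.ofReal (h x y) * (‖f y‖₊:ℝ≥0∞) ^ (2:ℝ) ∂μ
        = C * (‖f y‖₊:ℝ≥0∞) ^ (2:ℝ) := by
      intro y
      rw [lintegral_mul_const _ (hmy y).ennreal_ofReal,
        lintegral_congr fun x => by rw [hsymm x y], hrow]
    rw [lintegral_congr hcol, lintegral_const_mul' _ _ hC]
  have hGfin : ∫⁻ y, (‖f y‖₊:ℝ≥0∞) ^ (2:ℝ) ∂μ < ∞ := by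
    have := hf.2
    rw [eLpNorm_eq_lintegral_rpow_enorm_toReal (by norm_num) (by norm_num)] at this
    simp only [ENNReal.toReal_ofNat] at this
    exact (ENNReal.rpow_lt_top_iff_of_pos (by norm_num : (0:ℝ) < 1/2)).mp this
  -- measurability of the inner lintegral
  have hinner_meas : AEMeasurable (fun x => ∫⁻ y, ENNReal.ofReal (h x y) * ‖f y‖₊ ∂μ) μ := by
    have h1 : Measurable (fun z : Ω × Ω => ENNReal.ofReal (h z.1 z.2) * (‖f z.2‖₊:ℝ≥0∞)) :=
      hm.ennreal_ofReal.mul (hfm.comp measurable_snd).nnnorm.coe_nnreal_ennreal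
    exact h1.lintegral_prod_right'.aemeasurable
  have hsqfin : ∫⁻ x, (∫⁻ y, ENNReal.ofReal (h x y) * ‖f y‖₊ ∂μ) ^ (2:ℝ) ∂μ
      ≤ C * (C * ∫⁻ y, (‖f y‖₊:ℝ≥0∞) ^ (2:ℝ) ∂μ) := by
    calc ∫⁻ x, (∫⁻ y, ENNReal.ofReal (h x y) * ‖f y‖₊ ∂μ) ^ (2:ℝ) ∂μ
        ≤ ∫⁻ x, C * ∫⁻ y, ENNReal.ofReal (h x y) * (‖f y‖₊:ℝ≥0∞) ^ (2:ℝ) ∂μ ∂μ :=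
          lintegral_mono stepA'
      _ = C * (C * ∫⁻ y, (‖f y‖₊:ℝ≥0∞) ^ (2:ℝ) ∂μ) := by
          rw [lintegral_const_mul' _ _ hC, hdouble]
  have hfin' : ∫⁻ x, (∫⁻ y, ENNReal.ofReal (h x y) * ‖f y‖₊ ∂μ) ^ (2:ℝ) ∂μ ≠ ∞ :=
    (hsqfin.trans_lt (by
      exact ENNReal.mul_lt_top hC.lt_top (ENNReal.mul_lt_top hC.lt_top hGfin))).ne
  -- a.e. integrability
  have haeint : ∀ᵐ x ∂μ, Integrable (fun y => h x y * f y) μ := by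
    have hlt := ae_lt_top' (ENNReal.continuous_rpow_const.measurable.comp_aemeasurable
      hinner_meas) hfin'
    filter_upwards [hlt] with x hx
    simp only [Function.comp_apply] at hx
    have hfin2 : ∫⁻ y, ENNReal.ofReal (h x y) * ‖f y‖₊ ∂μ < ∞ := by
      by_contra hcon
      rw [not_lt, top_le_iff] at hcon
      rw [hcon, ENNReal.top_rpow_of_pos (by norm_num)] at hx
      exact (lt_irrefl _ hx).elim
    refine ⟨((hmx x).aestronglyMeasurable.mul hf.1), ?_⟩
    show (∫⁻ y, (‖h x y * f y‖₊ : ℝ≥0∞) ∂μ) < ∞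
    calc ∫⁻ y, (‖h x y * f y‖₊ : ℝ≥0∞) ∂μ
        = ∫⁻ y, ENNReal.ofReal (h x y) * ‖f y‖₊ ∂μ := lintegral_congr fun y => hnorm x y
      _ < ∞ := hfin2
  have hTbound : ∀ x, (‖∫ y, h x y * f y ∂μ‖₊ : ℝ≥0∞)
      ≤ ∫⁻ y, ENNReal.ofReal (h x y) * ‖f y‖₊ ∂μ := fun x =>
    (enorm_integral_le_lintegral_enorm _).trans_eq (lintegral_congr fun y => hnorm x y)
  have hTsnorm : eLpNorm (fun x => ∫ y, h x y * f y ∂μ) 2 μ ≤ C * eLpNorm f 2 μ := by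
    rw [eLpNorm_eq_lintegral_rpow_enorm_toReal (by norm_num) (by norm_num),
        eLpNorm_eq_lintegral_rpow_enorm_toReal (by norm_num) (by norm_num)]
    simp only [ENNReal.toReal_ofNat]
    calc (∫⁻ x, (‖∫ y, h x y * f y ∂μ‖₊ : ℝ≥0∞) ^ (2:ℝ) ∂μ) ^ (1/(2:ℝ))
        ≤ (∫⁻ x, (∫⁻ y, ENNReal.ofReal (h x y) * ‖f y‖₊ ∂μ) ^ (2:ℝ) ∂μ) ^ (1/(2:ℝ)) :=
          ENNReal.rpow_le_rpow (lintegral_mono fun x =>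
            ENNReal.rpow_le_rpow (hTbound x) (by norm_num)) (by norm_num)
      _ ≤ (C * (C * ∫⁻ y, (‖f y‖₊:ℝ≥0∞) ^ (2:ℝ) ∂μ)) ^ (1/(2:ℝ)) :=
          ENNReal.rpow_le_rpow hsqfin (by norm_num)
      _ = C * (∫⁻ y, (‖f y‖₊:ℝ≥0∞) ^ (2:ℝ) ∂μ) ^ (1/(2:ℝ)) := by
          rw [← mul_assoc, ENNReal.mul_rpow_of_nonneg _ _ (by norm_num : (0:ℝ) ≤ 1/2)]
          congr 1
          rw [← sq, ← ENNReal.rpow_two, ← ENNReal.rpow_mul]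
          norm_num
  have hTmeas : AEStronglyMeasurable (fun x => ∫ y, h x y * f y ∂μ) μ := by
    have : AEStronglyMeasurable (fun z : Ω × Ω => h z.1 z.2 * f z.2) (μ.prod μ) :=
      (hm.mul (hfm.comp measurable_snd)).aestronglyMeasurable
    exact this.integral_prod_right'
  exact ⟨haeint, ⟨hTmeas, hTsnorm.trans_lt (ENNReal.mul_lt_top hC.lt_top hf.2)⟩, hTsnorm⟩

lemma key {h : Ω → Ω → ℝ} (hm : Measurable (Function.uncurry h))
    (hpos : ∀ x y, 0 ≤ h x y) (hsymm : ∀ x y, h x y = h y x)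
    {C : ℝ≥0∞} (hC : C ≠ ∞)
    (hrow : ∀ x, ∫⁻ y, ENNReal.ofReal (h x y) ∂μ = C)
    {f : Ω → ℝ} (hf : MemLp f 2 μ) :
    (∀ᵐ x ∂μ, Integrable (fun y => h x y * f y) μ) ∧
      MemLp (fun x => ∫ y, h x y * f y ∂μ) 2 μ ∧
      eLpNorm (fun x => ∫ y, h x y * f y ∂μ) 2 μ ≤ C * eLpNorm f 2 μ := by
  obtain ⟨f', hf'm, hff'⟩ := hf.1
  have hf' : MemLp f' 2 μ := hf.ae_eq hff'
  have hT : (fun x => ∫ y, h x y * f y ∂μ) = fun x => ∫ y, h x y * f' y ∂μ := by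
    funext x; exact integral_congr_ae (hff'.mono fun y hy => by simp only [hy])
  obtain ⟨a, b, c⟩ := keyAux hm hpos hsymm hC hrow hf'm.measurable hf'
  refine ⟨?_, ?_, ?_⟩
  · filter_upwards [a] with x hx
    exact hx.congr (Filter.EventuallyEq.symm (hff'.mono fun y hy => by simp only [hy]))
  · rw [hT]; exact b
  · rw [hT, eLpNorm_congr_ae hff']; exact c

section Op

variable {h : Ω → Ω → ℝ} {C : ℝ≥0∞}

omit [IsProbabilityMeasure μ] in
lemma Tcongr (h : Ω → Ω → ℝ) {u v : Ω → ℝ} (huv : u =ᵐ[μ] v) :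
    (fun x => ∫ y, h x y * u y ∂μ) = fun x => ∫ y, h x y * v y ∂μ :=
  funext fun x => integral_congr_ae (huv.mono fun y hy => by simp only [hy])

noncomputable def kernelOp (hm : Measurable (uncurry h)) (hpos : ∀ x y, 0 ≤ h x y)
    (hsymm : ∀ x y, h x y = h y x) (hC : C ≠ ∞)
    (hrow : ∀ x, ∫⁻ y, ENNReal.ofReal (h x y) ∂μ = C) : Lp ℝ 2 μ →L[ℝ] Lp ℝ 2 μ :=
  LinearMap.mkContinuous
    { toFun := fun f => ((key hm hpos hsymm hC hrow (Lp.memLp f)).2.1).toLp _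
      map_add' := fun f g => by
        rw [← MemLp.toLp_add]
        apply MemLp.toLp_congr
        rw [Tcongr h (Lp.coeFn_add f g)]
        filter_upwards [(key hm hpos hsymm hC hrow (Lp.memLp f)).1,
          (key hm hpos hsymm hC hrow (Lp.memLp g)).1] with x hif hig
        simp only [Pi.add_apply]
        simp_rw [mul_add]
        rw [integral_add hif hig]
      map_smul' := fun c f => by
        simp only [RingHom.id_apply]
        rw [← MemLp.toLp_const_smul]
        apply MemLp.toLp_congr
        rw [Tcongr h (Lp.coeFn_smul c f)]
        refine Filter.Eventually.of_forall fun x => ?_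
        simp only [Pi.smul_apply, smul_eq_mul]
        simp_rw [mul_left_comm]
        rw [integral_const_mul] }
    C.toReal
    (fun f => by
      simp only [LinearMap.coe_mk, AddHom.coe_mk]
      rw [Lp.norm_toLp, Lp.norm_def]
      calc (eLpNorm (fun x => ∫ y, h x y * f y ∂μ) 2 μ).toReal
          ≤ (C * eLpNorm (f : Ω → ℝ) 2 μ).toReal :=
            ENNReal.toReal_mono (ENNReal.mul_ne_top hC (Lp.memLp f).2.ne)
              (key hm hpos hsymm hC hrow (Lp.memLp f)).2.2
        _ = C.toReal * (eLpNorm (f : Ω → ℝ) 2 μ).toReal := ENNReal.toReal_mul)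

lemma kernelOp_apply (hm : Measurable (uncurry h)) (hpos : ∀ x y, 0 ≤ h x y)
    (hsymm : ∀ x y, h x y = h y x) (hC : C ≠ ∞)
    (hrow : ∀ x, ∫⁻ y, ENNReal.ofReal (h x y) ∂μ = C) (f : Lp ℝ 2 μ) :
    (kernelOp hm hpos hsymm hC hrow f : Ω → ℝ) =ᵐ[μ] fun x => ∫ y, h x y * f y ∂μ :=
  MemLp.coeFn_toLp ((key hm hpos hsymm hC hrow (Lp.memLp f)).2.1)

lemma kernelOp_norm (hm : Measurable (uncurry h)) (hpos : ∀ x y, 0 ≤ h x y)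
    (hsymm : ∀ x y, h x y = h y x) (hC : C ≠ ∞)
    (hrow : ∀ x, ∫⁻ y, ENNReal.ofReal (h x y) ∂μ = C) :
    ‖kernelOp (μ := μ) hm hpos hsymm hC hrow‖ ≤ C.toReal :=
  LinearMap.mkContinuous_norm_le _ ENNReal.toReal_nonneg _


lemma sq_lint_lt_top {f : Ω → ℝ} (hf : MemLp f 2 μ) :
    ∫⁻ y, (‖f y‖₊ : ℝ≥0∞) ^ (2:ℝ) ∂μ < ∞ := by
  have := hf.2
  rw [eLpNorm_eq_lintegral_rpow_enorm_toReal (by norm_num) (by norm_num)] at this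
  simp only [ENNReal.toReal_ofNat] at this
  exact (ENNReal.rpow_lt_top_iff_of_pos (by norm_num : (0:ℝ) < 1/2)).mp this

lemma prodInt (hm : Measurable (uncurry h)) (hpos : ∀ x y, 0 ≤ h x y)
    (hsymm : ∀ x y, h x y = h y x) (hC : C ≠ ∞)
    (hrow : ∀ x, ∫⁻ y, ENNReal.ofReal (h x y) ∂μ = C)
    {u v : Ω → ℝ} (hum : Measurable u) (hu : MemLp u 2 μ)
    (hvm : Measurable v) (hv : MemLp v 2 μ) :
    Integrable (fun z : Ω × Ω => h z.1 z.2 * u z.2 * v z.1) (μ.prod μ) := by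
  have conj : (2:ℝ).HolderConjugate 2 := Real.HolderConjugate.two_two
  have hmy : ∀ y, Measurable fun x => h x y := fun y => hm.comp measurable_prodMk_right
  have hA : Measurable fun z : Ω × Ω => ENNReal.ofReal (h z.1 z.2) := hm.ennreal_ofReal
  have hAhalf : Measurable fun z : Ω × Ω => (ENNReal.ofReal (h z.1 z.2)) ^ (1/2:ℝ) :=
    ENNReal.continuous_rpow_const.measurable.comp hA
  have hGU : Measurable fun z : Ω × Ω => (‖u z.2‖₊ : ℝ≥0∞) := (hum.comp measurable_snd).nnnorm.coe_nnreal_ennreal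
  have hGV : Measurable fun z : Ω × Ω => (‖v z.1‖₊ : ℝ≥0∞) := (hvm.comp measurable_fst).nnnorm.coe_nnreal_ennreal
  have ha : AEMeasurable (fun z : Ω × Ω =>
      (ENNReal.ofReal (h z.1 z.2)) ^ (1/2:ℝ) * ‖u z.2‖₊) (μ.prod μ) := (hAhalf.mul hGU).aemeasurable
  have hb : AEMeasurable (fun z : Ω × Ω =>
      (ENNReal.ofReal (h z.1 z.2)) ^ (1/2:ℝ) * ‖v z.1‖₊) (μ.prod μ) := (hAhalf.mul hGV).aemeasurable
  have holder := ENNReal.lintegral_mul_le_Lp_mul_Lq (μ.prod μ) conj ha hb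
  simp only [Pi.mul_apply] at holder
  have hI1 : ∫⁻ z : Ω × Ω, ((ENNReal.ofReal (h z.1 z.2)) ^ (1/2:ℝ) * (‖u z.2‖₊:ℝ≥0∞)) ^ (2:ℝ)
      ∂(μ.prod μ) = (∫⁻ y, (‖u y‖₊:ℝ≥0∞) ^ (2:ℝ) ∂μ) * C := by
    have heq : ∀ z : Ω × Ω, ((ENNReal.ofReal (h z.1 z.2)) ^ (1/2:ℝ) * (‖u z.2‖₊:ℝ≥0∞)) ^ (2:ℝ)
        = ENNReal.ofReal (h z.1 z.2) * (‖u z.2‖₊:ℝ≥0∞) ^ (2:ℝ) := fun z => by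
      rw [ENNReal.mul_rpow_of_nonneg _ _ (by norm_num : (0:ℝ) ≤ 2), hsq]
    have hmeasU : AEMeasurable (fun z : Ω × Ω =>
        ENNReal.ofReal (h z.1 z.2) * (‖u z.2‖₊:ℝ≥0∞) ^ (2:ℝ)) (μ.prod μ) :=
      (hA.mul (ENNReal.continuous_rpow_const.measurable.comp hGU)).aemeasurable
    rw [lintegral_congr heq, lintegral_prod_symm _ hmeasU]
    have hcol : ∀ y, ∫⁻ x, ENNReal.ofReal (h x y) * (‖u y‖₊:ℝ≥0∞) ^ (2:ℝ) ∂μ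
        = (‖u y‖₊:ℝ≥0∞) ^ (2:ℝ) * C := fun y => by
      rw [lintegral_mul_const _ (hmy y).ennreal_ofReal,
        lintegral_congr fun x => by rw [hsymm x y], hrow, mul_comm]
    rw [lintegral_congr hcol, lintegral_mul_const' _ _ hC]
  have hI2 : ∫⁻ z : Ω × Ω, ((ENNReal.ofReal (h z.1 z.2)) ^ (1/2:ℝ) * (‖v z.1‖₊:ℝ≥0∞)) ^ (2:ℝ)
      ∂(μ.prod μ) = (∫⁻ x, (‖v x‖₊:ℝ≥0∞) ^ (2:ℝ) ∂μ) * C := by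
    have heq : ∀ z : Ω × Ω, ((ENNReal.ofReal (h z.1 z.2)) ^ (1/2:ℝ) * (‖v z.1‖₊:ℝ≥0∞)) ^ (2:ℝ)
        = ENNReal.ofReal (h z.1 z.2) * (‖v z.1‖₊:ℝ≥0∞) ^ (2:ℝ) := fun z => by
      rw [ENNReal.mul_rpow_of_nonneg _ _ (by norm_num : (0:ℝ) ≤ 2), hsq]
    have hmeasV : AEMeasurable (fun z : Ω × Ω =>
        ENNReal.ofReal (h z.1 z.2) * (‖v z.1‖₊:ℝ≥0∞) ^ (2:ℝ)) (μ.prod μ) :=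
      (hA.mul (ENNReal.continuous_rpow_const.measurable.comp hGV)).aemeasurable
    rw [lintegral_congr heq, lintegral_prod _ hmeasV]
    have hrowv : ∀ x, ∫⁻ y, ENNReal.ofReal (h x y) * (‖v x‖₊:ℝ≥0∞) ^ (2:ℝ) ∂μ
        = (‖v x‖₊:ℝ≥0∞) ^ (2:ℝ) * C := fun x => by
      have hmxx : Measurable fun y => ENNReal.ofReal (h x y) :=
        (hm.comp measurable_prodMk_left : Measurable fun y => h x y).ennreal_ofReal
      rw [lintegral_mul_const _ hmxx, hrow, mul_comm]
    rw [lintegral_congr hrowv, lintegral_mul_const' _ _ hC]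
  refine ⟨((hm.mul (hum.comp measurable_snd)).mul
    (hvm.comp measurable_fst)).aestronglyMeasurable, ?_⟩
  show (∫⁻ z : Ω × Ω, (‖h z.1 z.2 * u z.2 * v z.1‖₊ : ℝ≥0∞) ∂(μ.prod μ)) < ∞
  have hnorm : ∀ z : Ω × Ω, (‖h z.1 z.2 * u z.2 * v z.1‖₊ : ℝ≥0∞)
      = ((ENNReal.ofReal (h z.1 z.2)) ^ (1/2:ℝ) * (‖u z.2‖₊:ℝ≥0∞))
        * ((ENNReal.ofReal (h z.1 z.2)) ^ (1/2:ℝ) * (‖v z.1‖₊:ℝ≥0∞)) := fun z => by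
    rw [mul_mul_mul_comm, hsplit, nnnorm_mul, nnnorm_mul, ENNReal.coe_mul, ENNReal.coe_mul,
      ← enorm_eq_nnnorm (h z.1 z.2), Real.enorm_eq_ofReal (hpos z.1 z.2), mul_right_comm, mul_assoc,
      mul_comm ((‖v z.1‖₊:ℝ≥0∞)) ((‖u z.2‖₊:ℝ≥0∞))]
  calc ∫⁻ z : Ω × Ω, (‖h z.1 z.2 * u z.2 * v z.1‖₊ : ℝ≥0∞) ∂(μ.prod μ)
      = ∫⁻ z : Ω × Ω, ((ENNReal.ofReal (h z.1 z.2)) ^ (1/2:ℝ) * (‖u z.2‖₊:ℝ≥0∞))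
        * ((ENNReal.ofReal (h z.1 z.2)) ^ (1/2:ℝ) * (‖v z.1‖₊:ℝ≥0∞)) ∂(μ.prod μ) :=
        lintegral_congr hnorm
    _ ≤ ((∫⁻ y, (‖u y‖₊:ℝ≥0∞) ^ (2:ℝ) ∂μ) * C) ^ (1/(2:ℝ))
        * ((∫⁻ x, (‖v x‖₊:ℝ≥0∞) ^ (2:ℝ) ∂μ) * C) ^ (1/(2:ℝ)) := by
        rw [← hI1, ← hI2]; exact holder
    _ < ∞ := by
        apply ENNReal.mul_lt_top
        · exact ENNReal.rpow_lt_top_of_nonneg (by norm_num)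
            (ENNReal.mul_ne_top (sq_lint_lt_top hu).ne hC)
        · exact ENNReal.rpow_lt_top_of_nonneg (by norm_num)
            (ENNReal.mul_ne_top (sq_lint_lt_top hv).ne hC)


open scoped RealInnerProductSpace in
lemma kernelOp_symm (hm : Measurable (uncurry h)) (hpos : ∀ x y, 0 ≤ h x y)
    (hsymm : ∀ x y, h x y = h y x) (hC : C ≠ ∞)
    (hrow : ∀ x, ∫⁻ y, ENNReal.ofReal (h x y) ∂μ = C) (f g : Lp ℝ 2 μ) :
    ⟪kernelOp hm hpos hsymm hC hrow f, g⟫ = ⟪f, kernelOp hm hpos hsymm hC hrow g⟫ := by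
  obtain ⟨F', hF'm, hFF'⟩ := (Lp.memLp f).1
  obtain ⟨G', hG'm, hGG'⟩ := (Lp.memLp g).1
  have hF' : MemLp F' 2 μ := (Lp.memLp f).ae_eq hFF'
  have hG' : MemLp G' 2 μ := (Lp.memLp g).ae_eq hGG'
  have hprod := prodInt hm hpos hsymm hC hrow hF'm.measurable hF' hG'm.measurable hG'
  have lhs : ⟪kernelOp hm hpos hsymm hC hrow f, g⟫
      = ∫ x, (∫ y, h x y * F' y ∂μ) * G' x ∂μ := by
    rw [L2.inner_def]
    apply integral_congr_ae
    filter_upwards [kernelOp_apply hm hpos hsymm hC hrow f, hGG'] with x h1 h2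
    rw [RCLike.inner_apply', starRingEnd_apply, star_trivial, h1, h2,
      congrFun (Tcongr h hFF') x]
  have rhs : ⟪f, kernelOp hm hpos hsymm hC hrow g⟫
      = ∫ y, F' y * (∫ x, h y x * G' x ∂μ) ∂μ := by
    rw [L2.inner_def]
    apply integral_congr_ae
    filter_upwards [kernelOp_apply hm hpos hsymm hC hrow g, hFF'] with y h1 h2
    rw [RCLike.inner_apply', starRingEnd_apply, star_trivial, h1, h2,
      congrFun (Tcongr h hGG') y]
  have e1 : ∫ x, (∫ y, h x y * F' y ∂μ) * G' x ∂μ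
      = ∫ z : Ω × Ω, h z.1 z.2 * F' z.2 * G' z.1 ∂(μ.prod μ) := by
    rw [integral_prod _ hprod]
    refine integral_congr_ae (Filter.Eventually.of_forall fun x => ?_)
    show (∫ y, h x y * F' y ∂μ) * G' x = ∫ y, h x y * F' y * G' x ∂μ
    exact (integral_mul_const _ _).symm
  have e2 : ∫ z : Ω × Ω, h z.1 z.2 * F' z.2 * G' z.1 ∂(μ.prod μ)
      = ∫ y, ∫ x, h x y * F' y * G' x ∂μ ∂μ := integral_prod_symm _ hprod
  have e3 : ∫ y, ∫ x, h x y * F' y * G' x ∂μ ∂μ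
      = ∫ y, F' y * (∫ x, h y x * G' x ∂μ) ∂μ := by
    refine integral_congr_ae (Filter.Eventually.of_forall fun y => ?_)
    show ∫ x, h x y * F' y * G' x ∂μ = F' y * ∫ x, h y x * G' x ∂μ
    rw [← integral_const_mul]
    refine integral_congr_ae (Filter.Eventually.of_forall fun x => ?_)
    show h x y * F' y * G' x = F' y * (h y x * G' x)
    rw [hsymm x y]; ring
  rw [lhs, rhs, e1, e2, e3]

end Op

end DoeblinAux


open DoeblinAux
open scoped RealInnerProductSpace

/-- **Doeblin spectral gap.** If `k` is a symmetric measurable Markov transition density on a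
probability space `(Ω, μ)` bounded below by a constant `J ∈ [0,1]`, then the associated
integral operator `P` on `L²(μ)` is bounded and self-adjoint, and with `Π` the rank-one
projection onto constants, `‖P − Π‖ ≤ 1 − J`. -/
theorem stmt5 {Ω : Type*} [MeasurableSpace Ω] (μ : Measure Ω) [IsProbabilityMeasure μ]
    (J : ℝ) (hJ : J ∈ Set.Icc (0 : ℝ) 1)
    (k : Ω → Ω → ℝ) (hkmeas : Measurable (Function.uncurry k))
    (hksymm : ∀ x y, k x y = k y x)
    (hklb : ∀ x y, J ≤ k x y)
    (hkint : ∀ x, ∫ y, k x y ∂μ = 1) :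
    ∃ P Pi : Lp ℝ 2 μ →L[ℝ] Lp ℝ 2 μ,
      (∀ f : Lp ℝ 2 μ, (P f : Ω → ℝ) =ᵐ[μ] fun x => ∫ y, k x y * f y ∂μ) ∧
      (∀ f : Lp ℝ 2 μ, (Pi f : Ω → ℝ) =ᵐ[μ] fun _ => ∫ y, f y ∂μ) ∧
      (∀ f g : Lp ℝ 2 μ, ⟪P f, g⟫ = ⟪f, P g⟫) ∧
      ‖P - Pi‖ ≤ 1 - J := by
  have hJ1 : (0:ℝ) ≤ 1 - J := by linarith [hJ.2]
  have hk0 : ∀ x y, 0 ≤ k x y := fun x y => le_trans hJ.1 (hklb x y)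
  have hkI : ∀ x, Integrable (fun y => k x y) μ := fun x =>
    integrable_of_integral_eq_one (hkint x)
  have hrowk : ∀ x, ∫⁻ y, ENNReal.ofReal (k x y) ∂μ = 1 := fun x => by
    rw [← ofReal_integral_eq_lintegral_ofReal (hkI x)
      (Filter.Eventually.of_forall (hk0 x)), hkint x, ENNReal.ofReal_one]
  -- the constant kernel 1
  have honem : Measurable (Function.uncurry fun _ _ : Ω => (1:ℝ)) :=
    (measurable_const : Measurable fun _ : Ω × Ω => (1:ℝ))
  have hone0 : ∀ x y : Ω, (0:ℝ) ≤ (fun _ _ : Ω => (1:ℝ)) x y := fun _ _ => zero_le_one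
  have honesymm : ∀ x y : Ω, (fun _ _ : Ω => (1:ℝ)) x y = (fun _ _ : Ω => (1:ℝ)) y x :=
    fun _ _ => rfl
  have hrowone : ∀ x : Ω, ∫⁻ y, ENNReal.ofReal ((fun _ _ : Ω => (1:ℝ)) x y) ∂μ = 1 := fun x => by
    simp [lintegral_const]
  refine ⟨kernelOp hkmeas hk0 hksymm ENNReal.one_ne_top hrowk,
    kernelOp honem hone0 honesymm ENNReal.one_ne_top hrowone,
    kernelOp_apply hkmeas hk0 hksymm ENNReal.one_ne_top hrowk, ?_,
    kernelOp_symm hkmeas hk0 hksymm ENNReal.one_ne_top hrowk, ?_⟩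
  · intro f
    refine (kernelOp_apply honem hone0 honesymm ENNReal.one_ne_top hrowone f).trans ?_
    refine Filter.Eventually.of_forall fun x => ?_
    simp
  · -- norm bound
    set P := kernelOp (μ := μ) hkmeas hk0 hksymm ENNReal.one_ne_top hrowk with hPdef
    set Pi := kernelOp (μ := μ) honem hone0 honesymm ENNReal.one_ne_top hrowone with hPidef
    refine ContinuousLinearMap.opNorm_le_bound _ hJ1 fun f => ?_
    set m := ∫ y, (f : Ω → ℝ) y ∂μ with hmdef
    have hfInt : Integrable (f : Ω → ℝ) μ := (Lp.memLp f).integrable one_le_two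
    -- the kernel k - J
    have hdm : Measurable (Function.uncurry fun x y => k x y - J) :=
      hkmeas.sub measurable_const
    have hd0 : ∀ x y, 0 ≤ (fun x y => k x y - J) x y := fun x y => sub_nonneg.2 (hklb x y)
    have hdsymm : ∀ x y, (fun x y => k x y - J) x y = (fun x y => k x y - J) y x :=
      fun x y => by simp only [hksymm x y]
    have hdI : ∀ x, Integrable (fun y => k x y - J) μ := fun x =>
      (hkI x).sub (integrable_const J)
    have hdint : ∀ x, ∫ y, (k x y - J) ∂μ = 1 - J := fun x => by
      rw [integral_sub (hkI x) (integrable_const J), hkint, integral_const]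
      simp
    have hrowd : ∀ x, ∫⁻ y, ENNReal.ofReal ((fun x y => k x y - J) x y) ∂μ
        = ENNReal.ofReal (1 - J) := fun x => by
      rw [← ofReal_integral_eq_lintegral_ofReal (hdI x)
        (Filter.Eventually.of_forall (hd0 x)), hdint x]
    have hCne : ENNReal.ofReal (1 - J) ≠ ∞ := ENNReal.ofReal_ne_top
    -- constant function m as an Lp element
    have hmem : MemLp (fun _ : Ω => m) 2 μ := memLp_const m
    set cst : Lp ℝ 2 μ := hmem.toLp _ with hcstdef
    have hgmem : MemLp (fun y => (f : Ω → ℝ) y - m) 2 μ := (Lp.memLp f).sub hmem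
    -- identity (P - Pi) f =ᵐ T_{k-J}(f - m)
    have keyk := key hkmeas hk0 hksymm ENNReal.one_ne_top hrowk (Lp.memLp f)
    have hid : (((P - Pi) f : Lp ℝ 2 μ) : Ω → ℝ)
        =ᵐ[μ] fun x => ∫ y, (k x y - J) * ((f : Ω → ℝ) y - m) ∂μ := by
      have hPf := kernelOp_apply hkmeas hk0 hksymm ENNReal.one_ne_top hrowk f
      have hPif := kernelOp_apply honem hone0 honesymm ENNReal.one_ne_top hrowone f
      have hsub : (((P - Pi) f : Lp ℝ 2 μ) : Ω → ℝ) =ᵐ[μ] (P f : Ω → ℝ) - (Pi f : Ω → ℝ) := by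
        rw [ContinuousLinearMap.sub_apply]
        exact Lp.coeFn_sub (P f) (Pi f)
      filter_upwards [hsub, hPf, hPif, keyk.1] with x h1 h2 h3 h4
      have hexp : (fun y => (k x y - J) * ((f : Ω → ℝ) y - m))
          = fun y => k x y * (f : Ω → ℝ) y - m * k x y - J * (f : Ω → ℝ) y + J * m := by
        funext y; ring
      have hPix : (Pi f : Ω → ℝ) x = m := by
        rw [h3]; simp [hmdef]
      have hPx : (P f : Ω → ℝ) x = ∫ y, k x y * (f : Ω → ℝ) y ∂μ := h2
      have hRHS : ∫ y, (k x y - J) * ((f : Ω → ℝ) y - m) ∂μ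
          = (∫ y, k x y * (f : Ω → ℝ) y ∂μ) - m := by
        have ia : Integrable (fun y => m * k x y) μ := (hkI x).const_mul m
        have ib : Integrable (fun y => J * (f : Ω → ℝ) y) μ := hfInt.const_mul J
        have i1 : Integrable (fun y => k x y * (f : Ω → ℝ) y - m * k x y) μ := h4.sub ia
        have i2 : Integrable
            (fun y => k x y * (f : Ω → ℝ) y - m * k x y - J * (f : Ω → ℝ) y) μ := i1.sub ib
        rw [hexp, integral_add i2 (integrable_const _), integral_sub i1 ib,
          integral_sub h4 ia, integral_const_mul, integral_const_mul, hkint x, integral_const]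
        simp only [measure_univ, probReal_univ, ENNReal.toReal_one, smul_eq_mul, one_mul, mul_one]
        rw [← hmdef]
        ring
      rw [h1, hRHS]
      simp [hPx, hPix]
    -- norm estimates
    have hbound := (key hdm hd0 hdsymm hCne hrowd hgmem).2.2
    have hgcoe : ((f - cst : Lp ℝ 2 μ) : Ω → ℝ) =ᵐ[μ] fun y => (f : Ω → ℝ) y - m := by
      filter_upwards [Lp.coeFn_sub f cst, MemLp.coeFn_toLp hmem] with y h1 h2
      rw [h1]; simp [hcstdef, h2]
    -- ‖f - cst‖ ≤ ‖f‖
    have hinner : ⟪f, cst⟫ = m * m := by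
      rw [L2.inner_def]
      have : ∫ x, (inner ℝ ((f : Ω → ℝ) x) ((cst : Ω → ℝ) x) : ℝ) ∂μ = ∫ x, (f : Ω → ℝ) x * m ∂μ := by
        refine integral_congr_ae ?_
        filter_upwards [MemLp.coeFn_toLp hmem] with x hx
        rw [RCLike.inner_apply', starRingEnd_apply, star_trivial, hx]
      rw [this, integral_mul_const]
    have hcstn : ‖cst‖ ^ 2 = m * m := by
      rw [← real_inner_self_eq_norm_sq, L2.inner_def]
      have : ∫ x, (inner ℝ ((cst : Ω → ℝ) x) ((cst : Ω → ℝ) x) : ℝ) ∂μ = ∫ _x, m * m ∂μ := by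
        refine integral_congr_ae ?_
        filter_upwards [MemLp.coeFn_toLp hmem] with x hx
        rw [RCLike.inner_apply', starRingEnd_apply, star_trivial, hx]
      rw [this, integral_const]
      simp
    have hsubnorm : ‖f - cst‖ ≤ ‖f‖ := by
      have h1 : ‖f - cst‖ ^ 2 = ‖f‖ ^ 2 - m * m := by
        rw [norm_sub_sq_real, hinner, hcstn]; ring
      nlinarith [norm_nonneg (f - cst), norm_nonneg f, mul_self_nonneg m]
    -- put everything together
    calc ‖(P - Pi) f‖
        = (eLpNorm (fun x => ∫ y, (k x y - J) * ((f : Ω → ℝ) y - m) ∂μ) 2 μ).toReal := by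
          rw [Lp.norm_def, eLpNorm_congr_ae hid]
      _ ≤ (ENNReal.ofReal (1 - J) * eLpNorm (fun y => (f : Ω → ℝ) y - m) 2 μ).toReal :=
          ENNReal.toReal_mono (ENNReal.mul_ne_top ENNReal.ofReal_ne_top hgmem.2.ne) hbound
      _ = (1 - J) * ‖f - cst‖ := by
          rw [ENNReal.toReal_mul, ENNReal.toReal_ofReal hJ1,
            ← eLpNorm_congr_ae hgcoe, ← Lp.norm_def]
      _ ≤ (1 - J) * ‖f‖ := by
          exact mul_le_mul_of_nonneg_left hsubnorm hJ1
end

section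
/- Let H be a real Hilbert space, H₀ ⊆ H a closed subspace with orthogonal projection Π : H → H, and let P : H → H be a bounded linear operator with PΠ = ΠP = Π and ‖P − Π‖ ≤ ω₀ for some constant ω₀ < 1. Let U : H → H be an orthogonal (isometric, surjective) linear operator such that ‖Π(U f₀)‖ ≤ δ·‖f₀‖ for every f₀ ∈ H₀, for some constant δ < 1. Then ‖P U P‖ < 1; consequently the spectral radius of P U satisfies lim_{n→∞} ‖(PU)ⁿ‖^{1/n} < 1. -/
set_option maxHeartbeats 2000000

open scoped RealInnerProductSpace

lemma keyineq (ω d c s h t m r : ℝ) (hω0 : 0 ≤ ω) (hω1 : ω < 1) (hd0 : 0 ≤ d) (hd1 : d < 1)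
    (hcβ : c ≤ ((1-d)/2)^2) (hcγ : c ≤ 1-((1+d)/2)^2)
    (hs : 0 ≤ s) (hh : 0 ≤ h) (ht0 : 0 ≤ t) (hm0 : 0 ≤ m) (hr : 0 ≤ r)
    (hsh : s^2 + h^2 = r^2) (htb : t ≤ ω*h) (hmb : m ≤ d*s + t) (hm2 : m^2 ≤ s^2+t^2) :
    m^2 + ω^2*(s^2+t^2 - m^2) ≤ (1 - (1-ω^2)*c) * r^2 := by
  have hW : (0:ℝ) ≤ 1 - ω^2 := by nlinarith
  have hth : t ≤ h := htb.trans (by nlinarith)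
  have hsr : s ≤ r := by nlinarith
  have e0 : m^2 + ω^2*(s^2+t^2 - m^2) ≤ s^2 + t^2 := by
    nlinarith [mul_nonneg hW (by linarith : (0:ℝ) ≤ s^2 + t^2 - m^2)]
  rcases le_or_gt (((1-d)/2) * r) h with hc | hc
  · have hβ : (0:ℝ) ≤ ((1-d)/2) * r := by nlinarith
    have hh2 : ((1-d)/2)^2 * r^2 ≤ h^2 := by nlinarith [mul_self_le_mul_self hβ hc]
    have ht2 : t^2 ≤ ω^2 * h^2 := by nlinarith [mul_self_le_mul_self ht0 htb]
    have e1 : s^2 + t^2 ≤ r^2 - h^2 + ω^2*h^2 := by linarith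
    have e3 : (1-ω^2) * (c * r^2) ≤ (1-ω^2) * h^2 := by
      refine mul_le_mul_of_nonneg_left (hh2.trans' ?_) hW
      exact mul_le_mul_of_nonneg_right hcβ (sq_nonneg r)
    nlinarith [e0, e1, e3]
  · have hm' : m ≤ ((1+d)/2) * r := by nlinarith
    have q1 : s^2 + t^2 ≤ r^2 := by nlinarith [mul_self_le_mul_self ht0 hth]
    have q2 : m^2 ≤ ((1+d)/2)^2 * r^2 := by nlinarith [mul_self_le_mul_self hm0 hm']
    have e3 : (1-ω^2) * (c * r^2) ≤ (1-ω^2) * ((1-((1+d)/2)^2) * r^2) :=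
      mul_le_mul_of_nonneg_left (mul_le_mul_of_nonneg_right hcγ (sq_nonneg r)) hW
    have q3 : ω^2*(s^2+t^2) ≤ ω^2*r^2 := mul_le_mul_of_nonneg_left q1 (sq_nonneg ω)
    have q4 : (1-ω^2)*m^2 ≤ (1-ω^2)*(((1+d)/2)^2 * r^2) := mul_le_mul_of_nonneg_left q2 hW
    nlinarith [e3, q3, q4]

/-- Fekete-type lemma: a nonnegative submultiplicative sequence `f` satisfies
`f n ^ (1/n) → r` for some limit `r` with `r ≤ f n ^ (1/n)` for all `n ≥ 1`. -/
lemma fekete_aux (f : ℕ → ℝ) (hf0 : ∀ n, 0 ≤ f n) (hsub : ∀ m n, f (m+n) ≤ f m * f n) :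
    ∃ r : ℝ, 0 ≤ r ∧ (∀ n : ℕ, n ≠ 0 → r ≤ f n ^ ((n:ℝ)⁻¹)) ∧
      Filter.Tendsto (fun n : ℕ => f n ^ ((n:ℝ)⁻¹)) Filter.atTop (nhds r) := by
  by_cases hz : ∃ N, f N = 0
  · obtain ⟨N, hN⟩ := hz
    refine ⟨0, le_rfl, fun n _ => Real.rpow_nonneg (hf0 n) _, ?_⟩
    have hev : ∀ n, N + 1 ≤ n → f n ^ ((n:ℝ)⁻¹) = 0 := by
      intro n hn
      have h0 : f n = 0 := by
        have : f n ≤ f N * f (n - N) := by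
          have : N + (n - N) = n := by omega
          simpa [this] using hsub N (n - N)
        have h1 : f N * f (n - N) = 0 := by rw [hN, zero_mul]
        exact le_antisymm (by linarith) (hf0 n)
      rw [h0, Real.zero_rpow (inv_ne_zero (Nat.cast_ne_zero.2 (by omega)))]
    refine Filter.Tendsto.congr' ?_ tendsto_const_nhds
    exact (Filter.eventually_atTop.2 ⟨N+1, fun n hn => (hev n hn).symm⟩)
  · push_neg at hz
    have hpos : ∀ n, 0 < f n := fun n => (hf0 n).lt_of_ne (Ne.symm (hz n))
    set u : ℕ → ℝ := fun n => Real.log (f n) with hu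
    have hsubu : Subadditive u := by
      intro m n
      calc Real.log (f (m+n)) ≤ Real.log (f m * f n) := Real.log_le_log (hpos _) (hsub m n)
        _ = Real.log (f m) + Real.log (f n) := Real.log_mul (hpos m).ne' (hpos n).ne'
    have heq : ∀ n : ℕ, f n ^ ((n:ℝ)⁻¹) = Real.exp (u n / n) := by
      intro n
      rw [Real.rpow_def_of_pos (hpos n), div_eq_mul_inv]
    by_cases hbdd : BddBelow (Set.range fun n : ℕ => u n / n)
    · refine ⟨Real.exp hsubu.lim, (Real.exp_pos _).le, ?_, ?_⟩
      · intro n hn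
        rw [heq n]
        exact Real.exp_le_exp.2 (hsubu.lim_le_div hbdd hn)
      · have h1 := (Real.continuous_exp.tendsto _).comp (hsubu.tendsto_lim hbdd)
        exact h1.congr fun n => (heq n).symm
    · refine ⟨0, le_rfl, fun n _ => Real.rpow_nonneg (hf0 n) _, ?_⟩
      have hbot : Filter.Tendsto (fun n : ℕ => u n / n) Filter.atTop Filter.atBot := by
        rw [Filter.tendsto_atBot]
        intro b
        obtain ⟨x, hx, hxb⟩ := not_bddBelow_iff.1 hbdd (min b (-1))
        obtain ⟨n, rfl⟩ := hx
        have hn0 : n ≠ 0 := by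
          rintro rfl
          simp only [Nat.cast_zero, div_zero] at hxb
          have := min_le_right b (-1)
          linarith
        have hlt : u n / n < b := hxb.trans_le (min_le_left _ _)
        exact (hsubu.eventually_div_lt_of_div_lt hn0 hlt).mono fun p hp => hp.le
      have h1 := Real.tendsto_exp_atBot.comp hbot
      exact h1.congr fun n => (heq n).symm

/-- Abstract spectral gap estimate: if `P` is a bounded operator commuting with the orthogonal
projection `Π` onto a closed subspace `H₀` (`PΠ = ΠP = Π`) with `‖P − Π‖ ≤ ω₀ < 1`, and `U` is
an orthogonal operator whose averaged projection onto `H₀` is a contraction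
(`‖Π(Uf₀)‖ ≤ δ‖f₀‖` on `H₀` with `δ < 1`), then `‖PUP‖ < 1`, and consequently the spectral
radius `lim ‖(PU)ⁿ‖^{1/n}` is strictly less than `1`. -/
theorem stmt6 {H : Type*} [NormedAddCommGroup H] [InnerProductSpace ℝ H] [CompleteSpace H]
    (H₀ : Submodule ℝ H) (hH₀ : IsClosed (H₀ : Set H))
    (Pi : H →L[ℝ] H)
    (hPiMem : ∀ x : H, Pi x ∈ H₀)
    (hPiId : ∀ x ∈ H₀, Pi x = x)
    (hPiOrth : ∀ x : H, ∀ y ∈ H₀, ⟪x - Pi x, y⟫ = 0)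
    (P : H →L[ℝ] H) (hPPi : P.comp Pi = Pi) (hPiP : Pi.comp P = Pi)
    (ω₀ : ℝ) (hω₀ : ω₀ < 1) (hPnorm : ‖P - Pi‖ ≤ ω₀)
    (U : H →L[ℝ] H) (hUiso : ∀ x : H, ‖U x‖ = ‖x‖) (hUsurj : Function.Surjective U)
    (δ : ℝ) (hδ : δ < 1) (hU : ∀ f₀ ∈ H₀, ‖Pi (U f₀)‖ ≤ δ * ‖f₀‖) :
    ‖P.comp (U.comp P)‖ < 1 ∧
      ∃ r : ℝ, r < 1 ∧
        Filter.Tendsto (fun n : ℕ => ‖(P.comp U) ^ n‖ ^ ((n : ℝ)⁻¹))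
          Filter.atTop (nhds r) := by
  have hω0' : (0:ℝ) ≤ ω₀ := (norm_nonneg _).trans hPnorm
  set d : ℝ := max δ 0 with hd
  have hd0 : (0:ℝ) ≤ d := le_max_right _ _
  have hd1 : d < 1 := max_lt hδ one_pos
  have hU' : ∀ f₀ ∈ H₀, ‖Pi (U f₀)‖ ≤ d * ‖f₀‖ := fun f₀ hf =>
    (hU f₀ hf).trans (mul_le_mul_of_nonneg_right (le_max_left _ _) (norm_nonneg _))
  -- basic consequences of the hypotheses
  have hPiP' : ∀ x : H, Pi (P x) = Pi x := fun x => by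
    have := DFunLike.congr_fun hPiP x
    simpa using this
  have hPPi' : ∀ x : H, P (Pi x) = Pi x := fun x => by
    have := DFunLike.congr_fun hPPi x
    simpa using this
  have hPiPi : ∀ x : H, Pi (Pi x) = Pi x := fun x => hPiId _ (hPiMem x)
  have pyth : ∀ x : H, ‖x‖^2 = ‖Pi x‖^2 + ‖x - Pi x‖^2 := by
    intro x
    have h1 : ⟪Pi x, x - Pi x⟫ = 0 := by
      rw [real_inner_comm]; exact hPiOrth x (Pi x) (hPiMem x)
    have h2 : x = Pi x + (x - Pi x) := by abel
    calc ‖x‖^2 = ‖Pi x + (x - Pi x)‖^2 := by rw [← h2]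
      _ = ‖Pi x‖^2 + 2*⟪Pi x, x - Pi x⟫ + ‖x - Pi x‖^2 := norm_add_sq_real _ _
      _ = ‖Pi x‖^2 + ‖x - Pi x‖^2 := by rw [h1]; ring
  have hPi_le : ∀ x : H, ‖Pi x‖ ≤ ‖x‖ := by
    intro x
    nlinarith [pyth x, sq_nonneg ‖x - Pi x‖, norm_nonneg (Pi x), norm_nonneg x]
  have hsub_le : ∀ y : H, ‖P y - Pi y‖ ≤ ω₀ * ‖y - Pi y‖ := by
    intro y
    have h1 : P y - Pi y = (P - Pi) (y - Pi y) := by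
      simp only [ContinuousLinearMap.sub_apply, map_sub, hPPi', hPiPi]
      abel
    rw [h1]
    exact ((P - Pi).le_opNorm _).trans (mul_le_mul_of_nonneg_right hPnorm (norm_nonneg _))
  have hPy : ∀ y : H, ‖P y‖^2 = ‖Pi y‖^2 + ‖P y - Pi y‖^2 := by
    intro y
    have := pyth (P y)
    rwa [hPiP' y] at this
  -- the contraction constant
  set c : ℝ := min (((1-d)/2)^2) (1-((1+d)/2)^2) with hc
  have hcpos : 0 < c := by
    refine lt_min (pow_pos (by linarith : (0:ℝ) < (1-d)/2) 2) ?_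
    nlinarith
  have hcle : c ≤ ((1-d)/2)^2 := min_le_left _ _
  have hcle2 : ((1-d)/2)^2 ≤ 1/4 := by nlinarith
  set K2 : ℝ := 1 - (1-ω₀^2)*c with hK2
  have hωsq : (0:ℝ) ≤ 1 - ω₀^2 := by nlinarith
  have hωsq1 : 1 - ω₀^2 ≤ 1 := by nlinarith
  have hK2nonneg : 0 ≤ K2 := by
    have : (1-ω₀^2)*c ≤ 1*(1/4) :=
      mul_le_mul hωsq1 (hcle.trans hcle2) hcpos.le one_pos.le
    simp only [hK2]; linarith
  have hK2lt1 : K2 < 1 := by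
    have : 0 < (1-ω₀^2)*c := by
      have hω1 : 0 < 1 - ω₀^2 := by nlinarith
      exact mul_pos hω1 hcpos
    simp only [hK2]; linarith
  set K : ℝ := Real.sqrt K2 with hK
  have hK0 : 0 ≤ K := Real.sqrt_nonneg _
  have hKlt1 : K < 1 := by
    have := (Real.sqrt_lt_sqrt_iff hK2nonneg).2 hK2lt1
    rwa [Real.sqrt_one] at this
  -- the pointwise bound
  have hbx : ∀ x : H, ‖(P.comp (U.comp P)) x‖ ≤ K * ‖x‖ := by
    intro x
    set y : H := U (P x) with hy
    have hgoal : (P.comp (U.comp P)) x = P y := by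
      simp [hy, ContinuousLinearMap.comp_apply]
    set s : ℝ := ‖Pi x‖
    set hh : ℝ := ‖x - Pi x‖
    set t : ℝ := ‖P x - Pi x‖
    set m : ℝ := ‖Pi y‖
    have hsh : s^2 + hh^2 = ‖x‖^2 := (pyth x).symm
    have htb : t ≤ ω₀ * hh := hsub_le x
    have hyn : ‖y‖ = ‖P x‖ := hUiso _
    have hPx2 : ‖P x‖^2 = s^2 + t^2 := hPy x
    have hmb : m ≤ d*s + t := by
      have hdecomp : Pi y = Pi (U (Pi x)) + Pi (U (P x - Pi x)) := by
        have h5 : U (P x) = U (Pi x) + U (P x - Pi x) := by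
          rw [← map_add]
          congr 1
          abel
        rw [hy, h5, map_add]
      calc m = ‖Pi (U (Pi x)) + Pi (U (P x - Pi x))‖ := by rw [← hdecomp]
        _ ≤ ‖Pi (U (Pi x))‖ + ‖Pi (U (P x - Pi x))‖ := norm_add_le _ _
        _ ≤ d*s + t := by
            refine add_le_add (hU' (Pi x) (hPiMem x)) ?_
            exact (hPi_le _).trans (le_of_eq (hUiso _))
    have hm2 : m^2 ≤ s^2 + t^2 := by
      have h1 : m ≤ ‖y‖ := hPi_le y
      have h2 : m^2 ≤ ‖y‖^2 := by nlinarith [norm_nonneg (Pi y)]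
      rwa [hyn, hPx2] at h2
    have hmain : ‖P y‖^2 ≤ m^2 + ω₀^2*(s^2+t^2 - m^2) := by
      have h1 := hPy y
      have h2 : ‖P y - Pi y‖ ≤ ω₀ * ‖y - Pi y‖ := hsub_le y
      have h3 : ‖y - Pi y‖^2 = s^2 + t^2 - m^2 := by
        have := pyth y
        rw [hyn, hPx2] at this
        linarith
      have h4 : ‖P y - Pi y‖^2 ≤ ω₀^2 * ‖y - Pi y‖^2 := by
        nlinarith [norm_nonneg (P y - Pi y), norm_nonneg (y - Pi y),
          mul_nonneg hω0' (norm_nonneg (y - Pi y))]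
      rw [h3] at h4
      linarith
    have hkey := keyineq ω₀ d c s hh t m ‖x‖ hω0' hω₀ hd0 hd1 hcle (min_le_right _ _)
      (norm_nonneg _) (norm_nonneg _) (norm_nonneg _) (norm_nonneg _) (norm_nonneg _)
      hsh htb hmb hm2
    have hfin : ‖P y‖^2 ≤ K2 * ‖x‖^2 := by
      rw [hK2]; exact hmain.trans hkey
    have := Real.sqrt_le_sqrt hfin
    rwa [Real.sqrt_sq (norm_nonneg _), Real.sqrt_mul hK2nonneg,
      Real.sqrt_sq (norm_nonneg _), ← hK, ← hgoal] at this
  have hPUP : ‖P.comp (U.comp P)‖ ≤ K := ContinuousLinearMap.opNorm_le_bound _ hK0 hbx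
  refine ⟨hPUP.trans_lt hKlt1, ?_⟩
  -- spectral radius part
  set T : H →L[ℝ] H := P.comp U with hT
  have hsubmul : ∀ m n : ℕ, ‖T^(m+n)‖ ≤ ‖T^m‖ * ‖T^n‖ := fun m n => by
    rw [pow_add]; exact norm_mul_le _ _
  obtain ⟨r, hr0, hrle, htd⟩ := fekete_aux (fun n => ‖T^n‖) (fun n => norm_nonneg _) hsubmul
  refine ⟨r, ?_, htd⟩
  have hT2 : ‖T^2‖ ≤ K := by
    refine ContinuousLinearMap.opNorm_le_bound _ hK0 fun x => ?_
    have h1 : (T^2) x = (P.comp (U.comp P)) (U x) := by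
      simp [hT, pow_two, ContinuousLinearMap.mul_apply, ContinuousLinearMap.comp_apply]
    rw [h1, ← hUiso x]
    exact hbx (U x)
  calc r ≤ ‖T^2‖ ^ (((2:ℕ):ℝ)⁻¹) := hrle 2 two_ne_zero
    _ ≤ K ^ (((2:ℕ):ℝ)⁻¹) := Real.rpow_le_rpow (norm_nonneg _) hT2 (by norm_num)
    _ < 1 := Real.rpow_lt_one hK0 hKlt1 (by norm_num)
end
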